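/- arXiv:1305.0057 — 4 statements merged into one kernel-verified Lean document; each statement's English description precedes it below -/
import Mathlib

section
/- Let Φ be a reduced root system with a fixed base Π, and let π be the quotient map from ZΦ to ZΦ/⟨Π∖J⟩ for a subset J ⊆ Π. Then for any element α in π(Φ)∖{0} and any irreducible component Φ° of Φ, the set Φ° ∩ π⁻¹(α) contains a unique maximal root with respect to Π (i.e., a unique root a in the set such that a+b is not in the set for any simple root b ∈ Π). -/
open scoped RealInnerProductSpace

/-- A reduced root system `Φ` with a fixed base (system of simple roots) `base`
in a real inner product space. -/
structure RootSystemData (V : Type) [NormedAddCommGroup V] [InnerProductSpace ℝ V] where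
  Φ : Set V
  base : Finset V
  finite : Φ.Finite
  zero_notMem : (0:V) ∉ Φ
  neg_mem : ∀ a ∈ Φ, -a ∈ Φ
  reduced : ∀ a ∈ Φ, ∀ t : ℝ, t • a ∈ Φ → t = 1 ∨ t = -1
  reflect_mem : ∀ a ∈ Φ, ∀ b ∈ Φ, b - (2 * (inner ℝ a b : ℝ) / (inner ℝ a a : ℝ)) • a ∈ Φ
  cartan_int : ∀ a ∈ Φ, ∀ b ∈ Φ, ∃ n : ℤ, 2 * (inner ℝ a b : ℝ) / (inner ℝ a a : ℝ) = (n : ℝ)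
  base_sub : ↑base ⊆ Φ
  base_indep : LinearIndependent ℝ (fun b : base => (b : V))
  base_gen : ∀ a ∈ Φ,
    (∃ c : V → ℕ, a = ∑ b ∈ base, c b • b) ∨ (∃ c : V → ℕ, -a = ∑ b ∈ base, c b • b)

namespace RootSystemData

variable {V : Type} [NormedAddCommGroup V] [InnerProductSpace ℝ V] (RS : RootSystemData V)

/-- `a` is a nonnegative integral combination of the simple roots. -/
def IsPos (a : V) : Prop := ∃ c : V → ℕ, a = ∑ b ∈ RS.base, c b • b

/-- The quotient space `V / ⟨Π ∖ J⟩`, ambient space of the relative roots. -/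
abbrev Qspace (J : Finset V) : Type :=
  V ⧸ Submodule.span ℝ ((RS.base : Set V) \ (J : Set V))

/-- The canonical projection `π : V → V / ⟨Π ∖ J⟩`. -/
def proj (J : Finset V) : V →ₗ[ℝ] RS.Qspace J :=
  Submodule.mkQ _

/-- The set of relative roots `Φ_J = π(Φ) ∖ {0}`. -/
def relRoots (J : Finset V) : Set (RS.Qspace J) := (RS.proj J '' RS.Φ) \ {0}

/-- `β` is a simple relative root: a nonzero image of a simple root in `J`. -/
def IsSimpleRel (J : Finset V) (β : RS.Qspace J) : Prop :=
  β ≠ 0 ∧ ∃ b ∈ J, β = RS.proj J b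

/-- `β` is a positive relative root: a relative root that is a nonnegative
integral combination of the simple relative roots. -/
def IsPosRel (J : Finset V) (β : RS.Qspace J) : Prop :=
  β ∈ RS.relRoots J ∧ ∃ c : V → ℕ, β = ∑ b ∈ J, c b • RS.proj J b

/-- `a` is maximal in `S` with respect to the base `Π`. -/
def IsMaximalIn (S : Set V) (a : V) : Prop := a ∈ S ∧ ∀ b ∈ RS.base, a + b ∉ S

/-- `a` is minimal in `S` with respect to the base `Π`. -/
def IsMinimalIn (S : Set V) (a : V) : Prop := a ∈ S ∧ ∀ b ∈ RS.base, a - b ∉ S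

/-- `a` is the highest root: every root is obtained from it by subtracting a
nonnegative combination of simple roots. -/
def IsHighest (a : V) : Prop :=
  a ∈ RS.Φ ∧ ∀ b ∈ RS.Φ, ∃ c : V → ℕ, a - b = ∑ x ∈ RS.base, c x • x

/-- `S` is an irreducible component of `Φ`: a nonempty subset orthogonal to its
complement admitting no further nontrivial orthogonal splitting. -/
def IsComponent (S : Set V) : Prop :=
  S ⊆ RS.Φ ∧ S.Nonempty ∧ (∀ a ∈ S, ∀ b ∈ RS.Φ \ S, (inner ℝ a b : ℝ) = 0) ∧
    ∀ T ⊆ S, T.Nonempty → (∀ a ∈ T, ∀ b ∈ RS.Φ \ T, (inner ℝ a b : ℝ) = 0) → T = S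

/-- The root system is irreducible. -/
def Irred : Prop := RS.IsComponent RS.Φ

end RootSystemData

namespace RootSystemData

variable {V : Type} [NormedAddCommGroup V] [InnerProductSpace ℝ V] (RS : RootSystemData V)

lemma aux_inner_self_pos {x : V} (hx : x ∈ RS.Φ) : (0:ℝ) < inner ℝ x x :=
  lt_of_le_of_ne real_inner_self_nonneg
    (fun hh => RS.zero_notMem ((inner_self_eq_zero.1 hh.symm) ▸ hx))

lemma aux_sub_mem {a b : V} (ha : a ∈ RS.Φ) (hb : b ∈ RS.Φ)
    (hab : (0:ℝ) < inner ℝ a b) (hne : a ≠ b) : a - b ∈ RS.Φ := by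
  obtain ⟨n1, hn1⟩ := RS.cartan_int a ha b hb
  obtain ⟨n2, hn2⟩ := RS.cartan_int b hb a ha
  have haa := RS.aux_inner_self_pos ha
  have hbb := RS.aux_inner_self_pos hb
  have hba : (inner ℝ b a : ℝ) = inner ℝ a b := real_inner_comm a b
  rw [hba] at hn2
  have e1 : 2 * (inner ℝ a b : ℝ) = n1 * inner ℝ a a := by
    rw [div_eq_iff (ne_of_gt haa)] at hn1; linarith
  have e2 : 2 * (inner ℝ a b : ℝ) = n2 * inner ℝ b b := by
    rw [div_eq_iff (ne_of_gt hbb)] at hn2; linarith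
  have hn1pos : (0:ℤ) < n1 := by
    have : (0:ℝ) < (n1:ℝ) := by rw [← hn1]; exact div_pos (by linarith) haa
    exact_mod_cast this
  have hn2pos : (0:ℤ) < n2 := by
    have : (0:ℝ) < (n2:ℝ) := by rw [← hn2]; exact div_pos (by linarith) hbb
    exact_mod_cast this
  by_cases h2 : n2 = 1
  · have h := RS.reflect_mem b hb a ha
    rw [hba, hn2, h2] at h
    simpa using h
  by_cases h1 : n1 = 1
  · have h := RS.reflect_mem a ha b hb
    rw [hn1, h1] at h
    have h' := RS.neg_mem _ h
    simpa using h'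
  exfalso
  have h1' : (2:ℤ) ≤ n1 := by omega
  have h2' : (2:ℤ) ≤ n2 := by omega
  have hr1 : (2:ℝ) ≤ (n1:ℝ) := by exact_mod_cast h1'
  have hr2 : (2:ℝ) ≤ (n2:ℝ) := by exact_mod_cast h2'
  have cs := real_inner_mul_inner_self_le a b
  have e3 : (2 * (inner ℝ a b:ℝ)) * (2 * (inner ℝ a b:ℝ))
      = ((n1:ℝ) * inner ℝ a a) * ((n2:ℝ) * inner ℝ b b) := by
    nth_rewrite 1 [e1]; rw [e2]
  have h4 : (4:ℝ) ≤ (n1:ℝ) * n2 := by nlinarith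
  have key : (inner ℝ a b:ℝ) * inner ℝ a b = inner ℝ a a * inner ℝ b b := by
    have hge : inner ℝ a a * inner ℝ b b ≤ (inner ℝ a b:ℝ) * inner ℝ a b := by
      nlinarith [mul_pos haa hbb]
    linarith
  set t : ℝ := inner ℝ a b / inner ℝ a a with ht
  have hy : (inner ℝ (b - t • a) (b - t • a) : ℝ) = 0 := by
    have expand : (inner ℝ (b - t • a) (b - t • a) : ℝ)
        = inner ℝ b b - 2 * t * inner ℝ a b + t * t * inner ℝ a a := by
      simp only [inner_sub_left, inner_sub_right, real_inner_smul_left,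
        real_inner_smul_right, real_inner_comm a b]
      ring
    rw [expand, ht]
    field_simp
    nlinarith [key]
  have hb0 : b - t • a = 0 := inner_self_eq_zero.1 hy
  have hbta : b = t • a := by rwa [sub_eq_zero] at hb0
  have ht_pos : 0 < t := div_pos hab haa
  rcases RS.reduced a ha t (hbta ▸ hb) with h | h
  · rw [h, one_smul] at hbta; exact hne hbta.symm
  · rw [h] at ht_pos; norm_num at ht_pos

lemma aux_indepR (r : V → ℝ) (h : ∑ b ∈ RS.base, r b • b = 0) : ∀ b ∈ RS.base, r b = 0 := by
  have h' := linearIndependent_iff'.mp RS.base_indep Finset.univ (fun i => r i) ?_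
  · intro b hb; exact h' ⟨b, hb⟩ (Finset.mem_univ _)
  · rw [Finset.univ_eq_attach, Finset.sum_attach RS.base (fun x => r x • x)]; exact h

lemma aux_sum_ite_single (s : Finset V) [DecidableEq V] {b : V} (hb : b ∈ s) :
    ∑ x ∈ s, (if x = b then (1:ℝ) else 0) • x = b := by
  rw [Finset.sum_eq_single_of_mem b hb] <;> simp +contextual

lemma aux_sum_ext (s t : Finset V) (hst : s ⊆ t) (c : V → ℝ) [DecidableEq V] :
    ∑ x ∈ t, (if x ∈ s then c x else 0) • x = ∑ x ∈ s, c x • x := by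
  rw [← Finset.sum_subset hst (fun x _ hnx => by rw [if_neg hnx, zero_smul])]
  exact Finset.sum_congr rfl fun x hx => by rw [if_pos hx]

lemma aux_indepSub (s : Finset V) (hs : s ⊆ RS.base) (c : V → ℝ)
    (h : ∑ b ∈ s, c b • b = 0) : ∀ b ∈ s, c b = 0 := by
  classical
  have h2 : ∑ x ∈ RS.base, (if x ∈ s then c x else 0) • x = 0 := by
    rw [aux_sum_ext s RS.base hs c]; exact h
  have h3 := RS.aux_indepR _ h2
  intro b hb
  have h4 := h3 b (hs hb)
  rwa [if_pos hb] at h4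

lemma aux_inner_sum (x : V) (s : Finset V) (c : V → ℝ) :
    (inner ℝ x (∑ b ∈ s, c b • b) : ℝ) = ∑ b ∈ s, c b * inner ℝ x b := by
  rw [inner_sum]; exact Finset.sum_congr rfl fun b _ => real_inner_smul_right x b (c b)

lemma aux_nat_sum (s : Finset V) (c : V → ℕ) :
    ∑ b ∈ s, ((c b : ℕ) : ℝ) • b = ∑ b ∈ s, c b • b :=
  Finset.sum_congr rfl fun b _ => Nat.cast_smul_eq_nsmul ℝ (c b) b

lemma aux_proj_zero [DecidableEq V] (J : Finset V) {b : V} (hb : b ∈ RS.base \ J) : RS.proj J b = 0 := by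
  have hmem : b ∈ ((RS.base : Set V) \ (J : Set V)) := by
    rcases Finset.mem_sdiff.1 hb with ⟨h1, h2⟩
    exact ⟨h1, by simpa using h2⟩
  have : RS.proj J = Submodule.mkQ _ := rfl
  rw [this, Submodule.mkQ_apply, Submodule.Quotient.mk_eq_zero]
  exact Submodule.subset_span hmem

lemma aux_int_coords {x : V} (hx : x ∈ RS.Φ) :
    ∃ z : V → ℤ, x = ∑ b ∈ RS.base, (z b : ℝ) • b := by
  rcases RS.base_gen x hx with ⟨c, hc⟩ | ⟨c, hc⟩
  · refine ⟨fun b => (c b : ℤ), ?_⟩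
    rw [hc]
    refine Finset.sum_congr rfl fun b _ => ?_
    rw [Int.cast_natCast, Nat.cast_smul_eq_nsmul]
  · refine ⟨fun b => -(c b : ℤ), ?_⟩
    have hx2 : x = -∑ b ∈ RS.base, c b • b := by rw [← hc, neg_neg]
    rw [hx2]
    rw [show (∑ b ∈ RS.base, ((-(c b : ℤ) : ℤ) : ℝ) • b) = ∑ b ∈ RS.base, -(((c b : ℕ) : ℝ) • b)
      from Finset.sum_congr rfl fun b _ => by push_cast; rw [neg_smul]]
    rw [Finset.sum_neg_distrib]
    congr 1
    exact Finset.sum_congr rfl fun b _ => (Nat.cast_smul_eq_nsmul ℝ (c b) b).symm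

lemma aux_coords [DecidableEq V] (J : Finset V) (hJ : J ⊆ RS.base) {x y : V}
    (hx : x ∈ RS.Φ) (hy : y ∈ RS.Φ) (hxy : RS.proj J x = RS.proj J y) :
    ∃ z : V → ℤ, x - y = ∑ b ∈ RS.base \ J, (z b : ℝ) • b := by
  obtain ⟨zx, hzx⟩ := RS.aux_int_coords hx
  obtain ⟨zy, hzy⟩ := RS.aux_int_coords hy
  set w : V → ℤ := fun b => zx b - zy b with hw
  have hsum : x - y = ∑ b ∈ RS.base, (w b : ℝ) • b := by
    rw [hzx, hzy, ← Finset.sum_sub_distrib]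
    refine Finset.sum_congr rfl fun b _ => ?_
    rw [← sub_smul]
    congr 1
    exact (Int.cast_sub _ _).symm
  have hproj : ∑ b ∈ J, (w b : ℝ) • RS.proj J b = 0 := by
    have h0 : RS.proj J (x - y) = 0 := by rw [map_sub, hxy, sub_self]
    rw [hsum, map_sum] at h0
    simp only [map_smul] at h0
    rw [← Finset.sum_sdiff hJ] at h0
    have hz : ∑ b ∈ RS.base \ J, (w b : ℝ) • RS.proj J b = 0 :=
      Finset.sum_eq_zero fun b hb => by rw [RS.aux_proj_zero J hb, smul_zero]
    rw [hz, zero_add] at h0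
    exact h0
  have hJ0 : ∀ b ∈ J, (w b : ℝ) = 0 := by
    have hv : (∑ b ∈ J, (w b : ℝ) • b) ∈ Submodule.span ℝ ((RS.base : Set V) \ (J : Set V)) := by
      have hh : RS.proj J (∑ b ∈ J, (w b : ℝ) • b) = 0 := by
        rw [map_sum]; simp only [map_smul]; exact hproj
      have hrfl : RS.proj J = Submodule.mkQ _ := rfl
      rwa [hrfl, Submodule.mkQ_apply, Submodule.Quotient.mk_eq_zero] at hh
    rw [← Finset.coe_sdiff] at hv
    obtain ⟨g, -, hg⟩ := Submodule.mem_span_finset.1 hv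
    set r : V → ℝ :=
      fun b => (if b ∈ J then (w b : ℝ) else 0) - (if b ∈ RS.base \ J then g b else 0) with hr
    have hr0 : ∑ b ∈ RS.base, r b • b = 0 := by
      simp only [hr, sub_smul]
      rw [Finset.sum_sub_distrib, aux_sum_ext J RS.base hJ,
        aux_sum_ext (RS.base \ J) RS.base Finset.sdiff_subset g, hg, sub_self]
    have hall := RS.aux_indepR r hr0
    intro b hb
    have h5 := hall b (hJ hb)
    have hbn : b ∉ RS.base \ J := fun hc => (Finset.mem_sdiff.1 hc).2 hb
    simpa [hr, hb, hbn] using h5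
  refine ⟨w, ?_⟩
  rw [hsum, ← Finset.sum_sdiff hJ]
  have hz2 : ∑ b ∈ J, (w b : ℝ) • b = 0 :=
    Finset.sum_eq_zero fun b hb => by rw [hJ0 b hb, zero_smul]
  rw [hz2, add_zero]

lemma aux_simple_nonpos {b b' : V} (hb : b ∈ RS.base) (hb' : b' ∈ RS.base) (hne : b ≠ b') :
    (inner ℝ b b' : ℝ) ≤ 0 := by
  classical
  by_contra hpos
  push_neg at hpos
  have hroot := RS.aux_sub_mem (RS.base_sub hb) (RS.base_sub hb') hpos hne
  rcases RS.base_gen _ hroot with ⟨c, hc⟩ | ⟨c, hc⟩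
  · set r : V → ℝ :=
      fun x => (c x : ℝ) + (if x = b' then 1 else 0) - (if x = b then 1 else 0) with hr
    have hr0 : ∑ x ∈ RS.base, r x • x = 0 := by
      simp only [hr, add_smul, sub_smul]
      rw [Finset.sum_sub_distrib, Finset.sum_add_distrib, aux_sum_ite_single RS.base hb',
        aux_sum_ite_single RS.base hb, aux_nat_sum, ← hc]
      abel
    have h5 := RS.aux_indepR r hr0 b' hb'
    rw [hr] at h5
    simp only [if_pos rfl, if_neg (Ne.symm hne)] at h5
    have : (0:ℝ) ≤ (c b' : ℝ) := Nat.cast_nonneg _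
    norm_num at h5
    linarith
  · set r : V → ℝ :=
      fun x => (c x : ℝ) + (if x = b then 1 else 0) - (if x = b' then 1 else 0) with hr
    have hr0 : ∑ x ∈ RS.base, r x • x = 0 := by
      simp only [hr, add_smul, sub_smul]
      rw [Finset.sum_sub_distrib, Finset.sum_add_distrib, aux_sum_ite_single RS.base hb,
        aux_sum_ite_single RS.base hb', aux_nat_sum, ← hc]
      abel
    have h5 := RS.aux_indepR r hr0 b hb
    rw [hr] at h5
    simp only [if_pos rfl, if_neg hne] at h5
    have : (0:ℝ) ≤ (c b : ℝ) := Nat.cast_nonneg _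
    norm_num at h5
    linarith

lemma aux_PN_nonpos [DecidableEq V] (J : Finset V) (p n : V → ℕ)
    (hdisj : ∀ b ∈ RS.base \ J, p b = 0 ∨ n b = 0) :
    (inner ℝ (∑ b ∈ RS.base \ J, (p b : ℝ) • b) (∑ b ∈ RS.base \ J, (n b : ℝ) • b) : ℝ) ≤ 0 := by
  rw [sum_inner]
  apply Finset.sum_nonpos
  intro b hb
  rw [real_inner_smul_left, aux_inner_sum]
  rcases hdisj b hb with h | h
  · rw [h]; simp
  · apply mul_nonpos_of_nonneg_of_nonpos (Nat.cast_nonneg _)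
    apply Finset.sum_nonpos
    intro b' hb'
    by_cases hbb : b' = b
    · subst hbb; rw [h]; simp
    · exact mul_nonpos_of_nonneg_of_nonpos (Nat.cast_nonneg _)
        (RS.aux_simple_nonpos (Finset.mem_sdiff.1 hb).1 (Finset.mem_sdiff.1 hb').1
          (fun hh => hbb hh.symm))


lemma aux_moveUp [DecidableEq V] (J : Finset V) {α : RS.Qspace J} (hα0 : α ≠ 0)
    {S : Set V} (hS : RS.IsComponent S)
    {x b : V} (hx : x ∈ S ∩ RS.proj J ⁻¹' {α}) (hb : b ∈ RS.base \ J)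
    (hneg : (inner ℝ x b : ℝ) < 0) : x + b ∈ S ∩ RS.proj J ⁻¹' {α} := by
  obtain ⟨hsub, -, horth, -⟩ := hS
  have hxS : x ∈ S := hx.1
  have hxΦ : x ∈ RS.Φ := hsub hxS
  have hbB : b ∈ RS.base := (Finset.mem_sdiff.1 hb).1
  have hbΦ : b ∈ RS.Φ := RS.base_sub hbB
  have hpx : RS.proj J x = α := hx.2
  have hpb : RS.proj J b = 0 := RS.aux_proj_zero J hb
  have hxne : x ≠ -b := by
    intro h; apply hα0; rw [← hpx, h, map_neg, hpb, neg_zero]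
  have hplus : x + b ∈ RS.Φ := by
    have h1 : (0:ℝ) < inner ℝ x (-b) := by rw [inner_neg_right]; linarith
    have h2 := RS.aux_sub_mem hxΦ (RS.neg_mem b hbΦ) h1 hxne
    rwa [sub_neg_eq_add] at h2
  have hbS : b ∈ S := by
    by_contra hbs
    exact absurd (horth x hxS b ⟨hbΦ, hbs⟩) (ne_of_lt hneg)
  have hxbS : x + b ∈ S := by
    by_contra hc
    have h1 := horth x hxS (x + b) ⟨hplus, hc⟩
    have h2 := horth b hbS (x + b) ⟨hplus, hc⟩
    have h3 : (inner ℝ (x + b) (x + b) : ℝ) = 0 := by rw [inner_add_left, h1, h2, add_zero]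
    exact absurd h3 (ne_of_gt (RS.aux_inner_self_pos hplus))
  refine ⟨hxbS, ?_⟩
  simp only [Set.mem_preimage, Set.mem_singleton_iff, map_add, hpx, hpb, add_zero]

lemma aux_moveDown [DecidableEq V] (J : Finset V) {α : RS.Qspace J} (hα0 : α ≠ 0)
    {S : Set V} (hS : RS.IsComponent S)
    {x b : V} (hx : x ∈ S ∩ RS.proj J ⁻¹' {α}) (hb : b ∈ RS.base \ J)
    (hpos : (0:ℝ) < inner ℝ x b) : x - b ∈ S ∩ RS.proj J ⁻¹' {α} := by
  obtain ⟨hsub, -, horth, -⟩ := hS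
  have hxS : x ∈ S := hx.1
  have hxΦ : x ∈ RS.Φ := hsub hxS
  have hbB : b ∈ RS.base := (Finset.mem_sdiff.1 hb).1
  have hbΦ : b ∈ RS.Φ := RS.base_sub hbB
  have hpx : RS.proj J x = α := hx.2
  have hpb : RS.proj J b = 0 := RS.aux_proj_zero J hb
  have hxne : x ≠ b := by
    intro h; apply hα0; rw [← hpx, h, hpb]
  have hminus : x - b ∈ RS.Φ := RS.aux_sub_mem hxΦ hbΦ hpos hxne
  have hbS : b ∈ S := by
    by_contra hbs
    exact absurd (horth x hxS b ⟨hbΦ, hbs⟩) (ne_of_gt hpos)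
  have hxbS : x - b ∈ S := by
    by_contra hc
    have h1 := horth x hxS (x - b) ⟨hminus, hc⟩
    have h2 := horth b hbS (x - b) ⟨hminus, hc⟩
    have h3 : (inner ℝ (x - b) (x - b) : ℝ) = 0 := by rw [inner_sub_left, h1, h2, sub_zero]
    exact absurd h3 (ne_of_gt (RS.aux_inner_self_pos hminus))
  refine ⟨hxbS, ?_⟩
  simp only [Set.mem_preimage, Set.mem_singleton_iff, map_sub, hpx, hpb, sub_zero]

lemma aux_dom [DecidableEq V] (J : Finset V) {α : RS.Qspace J} (hα0 : α ≠ 0)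
    {S : Set V} (hS : RS.IsComponent S) {a : V}
    (hmax : RS.IsMaximalIn (S ∩ RS.proj J ⁻¹' {α}) a) :
    ∀ b ∈ RS.base \ J, (0:ℝ) ≤ inner ℝ a b := by
  intro b hb
  by_contra h
  push_neg at h
  exact hmax.2 b (Finset.mem_sdiff.1 hb).1 (RS.aux_moveUp J hα0 hS hmax.1 hb h)

lemma aux_update_sum_smul [DecidableEq V] (s : Finset V) {b : V} (hb : b ∈ s)
    (m : V → ℕ) (hmb : 1 ≤ m b) :
    ∑ x ∈ s, ((Function.update m b (m b - 1) x : ℕ) : ℝ) • x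
      = ∑ x ∈ s, ((m x : ℕ) : ℝ) • x - b := by
  have hpt : ∀ x ∈ s, ((Function.update m b (m b - 1) x : ℕ) : ℝ) • x
      = ((m x : ℕ) : ℝ) • x - (if x = b then (1:ℝ) else 0) • x := by
    intro x hx
    by_cases hxb : x = b
    · subst hxb
      rw [Function.update_self, if_pos rfl, one_smul, Nat.cast_sub hmb, sub_smul]
      norm_num
    · rw [Function.update_of_ne hxb, if_neg hxb, zero_smul, sub_zero]
  rw [Finset.sum_congr rfl hpt, Finset.sum_sub_distrib, aux_sum_ite_single s hb]

lemma aux_update_sum_nat [DecidableEq V] (s : Finset V) {b : V} (hb : b ∈ s)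
    (m : V → ℕ) (hmb : 1 ≤ m b) :
    ∑ x ∈ s, Function.update m b (m b - 1) x = (∑ x ∈ s, m x) - 1 := by
  rw [Finset.sum_update_of_mem hb]
  have h2 : ∑ x ∈ s, m x = m b + ∑ x ∈ s \ {b}, m x := by
    rw [← Finset.erase_eq, Finset.add_sum_erase s m hb]
  omega

lemma aux_no_higher [DecidableEq V] (J : Finset V) {α : RS.Qspace J} (hα0 : α ≠ 0)
    {S : Set V} (hS : RS.IsComponent S) {a : V}
    (hmax : RS.IsMaximalIn (S ∩ RS.proj J ⁻¹' {α}) a) :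
    ∀ k : ℕ, ∀ m : V → ℕ, (∑ b ∈ RS.base \ J, m b) ≤ k →
      (∑ b ∈ RS.base \ J, ((m b : ℕ) : ℝ) • b) ≠ 0 →
      a + (∑ b ∈ RS.base \ J, ((m b : ℕ) : ℝ) • b) ∉ S ∩ RS.proj J ⁻¹' {α} := by
  intro k
  induction k with
  | zero =>
    intro m hm hM _
    apply hM
    refine Finset.sum_eq_zero fun b hb => ?_
    have h0 : m b = 0 := by
      have := Finset.sum_eq_zero_iff.1 (Nat.le_zero.1 hm) b hb
      exact this
    rw [h0]; simp
  | succ k ih =>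
    intro m hm hM hmem
    set M := ∑ b ∈ RS.base \ J, ((m b : ℕ) : ℝ) • b with hMdef
    have hMM : (0:ℝ) < inner ℝ M M :=
      lt_of_le_of_ne real_inner_self_nonneg (fun h => hM (inner_self_eq_zero.1 h.symm))
    by_cases haM : (inner ℝ a M : ℝ) < 0
    · have h1 : (inner ℝ a M : ℝ) = ∑ b ∈ RS.base \ J, ((m b : ℕ) : ℝ) * inner ℝ a b :=
        aux_inner_sum a _ _
    
      have h2 : ∑ b ∈ RS.base \ J, ((m b : ℕ) : ℝ) * inner ℝ a b
          < ∑ b ∈ RS.base \ J, (0:ℝ) := by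
        rw [← h1]; simpa using haM
      obtain ⟨b, hbΔ, hb2⟩ := Finset.exists_lt_of_sum_lt h2
      have hab : (inner ℝ a b : ℝ) < 0 := by
        by_contra hge
        push_neg at hge
        exact absurd hb2 (not_lt.2 (mul_nonneg (Nat.cast_nonneg _) hge))
      exact hmax.2 b (Finset.mem_sdiff.1 hbΔ).1 (RS.aux_moveUp J hα0 hS hmax.1 hbΔ hab)
    · push_neg at haM
      have hyM : (0:ℝ) < inner ℝ (a + M) M := by
        rw [inner_add_left]; linarith
      have h1 : (inner ℝ (a + M) M : ℝ) = ∑ b ∈ RS.base \ J, ((m b : ℕ) : ℝ) * inner ℝ (a + M) b :=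
        aux_inner_sum _ _ _
      have h2 : ∑ b ∈ RS.base \ J, (0:ℝ)
          < ∑ b ∈ RS.base \ J, ((m b : ℕ) : ℝ) * inner ℝ (a + M) b := by
        rw [← h1]; simpa using hyM
      obtain ⟨b, hbΔ, hb2⟩ := Finset.exists_lt_of_sum_lt h2
      have hyb : (0:ℝ) < inner ℝ (a + M) b := by
        by_contra hge
        push_neg at hge
        exact absurd hb2 (not_lt.2 (mul_nonpos_of_nonneg_of_nonpos (Nat.cast_nonneg _) hge))
      have hmb : 1 ≤ m b := by
        by_contra hh
        push_neg at hh
        have : m b = 0 := by omega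
        rw [this] at hb2
        norm_num at hb2
      have hmem' := RS.aux_moveDown J hα0 hS hmem hbΔ hyb
      set m' := Function.update m b (m b - 1) with hm'
      have hM' : ∑ x ∈ RS.base \ J, ((m' x : ℕ) : ℝ) • x = M - b :=
        aux_update_sum_smul _ hbΔ m hmb
      have hsum' : ∑ x ∈ RS.base \ J, m' x ≤ k := by
        rw [aux_update_sum_nat _ hbΔ m hmb]; omega
      by_cases hz : M - b = 0
      · have hMb : M = b := by rwa [sub_eq_zero] at hz
        rw [hMb] at hmem
        exact hmax.2 b (Finset.mem_sdiff.1 hbΔ).1 hmem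
      · refine ih m' hsum' (by rwa [hM']) ?_
        rw [hM']
        have he : a + (M - b) = a + M - b := by abel
        rw [he]
        exact hmem'

lemma aux_descend [DecidableEq V] (J : Finset V) {α : RS.Qspace J} (hα0 : α ≠ 0)
    {S : Set V} (hS : RS.IsComponent S) {a : V}
    (hdom : ∀ b ∈ RS.base \ J, (0:ℝ) ≤ inner ℝ a b) :
    ∀ k : ℕ, ∀ x : V, ∀ p n : V → ℕ,
      x ∈ S ∩ RS.proj J ⁻¹' {α} →
      (∑ b ∈ RS.base \ J, n b) ≤ k →
      (∀ b ∈ RS.base \ J, p b = 0 ∨ n b = 0) →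
      a - x = ∑ b ∈ RS.base \ J, ((p b : ℕ) : ℝ) • b - ∑ b ∈ RS.base \ J, ((n b : ℕ) : ℝ) • b →
      x - ∑ b ∈ RS.base \ J, ((n b : ℕ) : ℝ) • b ∈ S ∩ RS.proj J ⁻¹' {α} := by
  intro k
  induction k with
  | zero =>
    intro x p n hx hn _ _
    have hz : ∑ b ∈ RS.base \ J, ((n b : ℕ) : ℝ) • b = 0 := by
      refine Finset.sum_eq_zero fun b hb => ?_
      have h0 := Finset.sum_eq_zero_iff.1 (Nat.le_zero.1 hn) b hb
      rw [h0]; simp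
    rw [hz, sub_zero]
    exact hx
  | succ k ih =>
    intro x p n hx hn hdisj hax
    by_cases hNz : ∑ b ∈ RS.base \ J, ((n b : ℕ) : ℝ) • b = 0
    · rw [hNz, sub_zero]; exact hx
    · set P := ∑ b ∈ RS.base \ J, ((p b : ℕ) : ℝ) • b with hPdef
      set N := ∑ b ∈ RS.base \ J, ((n b : ℕ) : ℝ) • b with hNdef
      have hNN : (0:ℝ) < inner ℝ N N :=
        lt_of_le_of_ne real_inner_self_nonneg (fun h => hNz (inner_self_eq_zero.1 h.symm))
      have haN : (0:ℝ) ≤ inner ℝ a N := by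
        rw [hNdef, aux_inner_sum]
        exact Finset.sum_nonneg fun b hb => mul_nonneg (Nat.cast_nonneg _) (hdom b hb)
      have hPN : (inner ℝ P N : ℝ) ≤ 0 := RS.aux_PN_nonpos J p n hdisj
      have hx_eq : x = a - (P - N) := by rw [← hax]; abel
      have hxN : (0:ℝ) < inner ℝ x N := by
        rw [hx_eq, inner_sub_left, inner_sub_left]
        linarith
      have h1 : (inner ℝ x N : ℝ) = ∑ b ∈ RS.base \ J, ((n b : ℕ) : ℝ) * inner ℝ x b := by
        rw [hNdef]; exact aux_inner_sum _ _ _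
      have h2 : ∑ b ∈ RS.base \ J, (0:ℝ)
          < ∑ b ∈ RS.base \ J, ((n b : ℕ) : ℝ) * inner ℝ x b := by
        rw [← h1]; simpa using hxN
      obtain ⟨b, hbΔ, hb2⟩ := Finset.exists_lt_of_sum_lt h2
      have hxb : (0:ℝ) < inner ℝ x b := by
        by_contra hge
        push_neg at hge
        exact absurd hb2 (not_lt.2 (mul_nonpos_of_nonneg_of_nonpos (Nat.cast_nonneg _) hge))
      have hnb : 1 ≤ n b := by
        by_contra hh
        push_neg at hh
        have h0 : n b = 0 := by omega
        rw [h0] at hb2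
        norm_num at hb2
      have hmem' := RS.aux_moveDown J hα0 hS hx hbΔ hxb
      set n' := Function.update n b (n b - 1) with hn'
      have hN' : ∑ x ∈ RS.base \ J, ((n' x : ℕ) : ℝ) • x = N - b :=
        aux_update_sum_smul _ hbΔ n hnb
      have hsum' : ∑ x ∈ RS.base \ J, n' x ≤ k := by
        rw [aux_update_sum_nat _ hbΔ n hnb]; omega
      have hdisj' : ∀ b' ∈ RS.base \ J, p b' = 0 ∨ n' b' = 0 := by
        intro b' hb'
        rcases hdisj b' hb' with h | h
        · exact Or.inl h
        · by_cases hbb : b' = b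
          · subst hbb; omega
          · right; rw [hn', Function.update_of_ne hbb]; exact h
      have hax' : a - (x - b) = P - (N - b) := by
        rw [show a - (x - b) = a - x + b by abel, hax]; abel
      have hres := ih (x - b) p n' hmem' hsum' hdisj' (by rw [hN']; exact hax')
      rw [hN'] at hres
      rwa [show x - b - (N - b) = x - N by abel] at hres

lemma aux_exists_max (J : Finset V) {α : RS.Qspace J} {S : Set V} (hSsub : S ⊆ RS.Φ)
    (hne : (S ∩ RS.proj J ⁻¹' {α}).Nonempty) :
    ∃ a : V, RS.IsMaximalIn (S ∩ RS.proj J ⁻¹' {α}) a := by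
  classical
  obtain ⟨f, hf⟩ : ∃ f : V →ₗ[ℝ] ℝ, ∀ b ∈ RS.base, f b = 1 := by
    have hli' : LinearIndepOn ℝ id (RS.base : Set V) := RS.base_indep
    let B := Module.Basis.extend hli'
    let g : hli'.extend (Set.subset_univ _) → ℝ := fun i => if (i : V) ∈ RS.base then (1:ℝ) else 0
    refine ⟨B.constr ℝ g, ?_⟩
    intro b hb
    have hbe : b ∈ hli'.extend (Set.subset_univ _) := hli'.subset_extend _ (by simpa using hb)
    have hB : B ⟨b, hbe⟩ = b := Module.Basis.extend_apply_self hli' ⟨b, hbe⟩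
    calc (B.constr ℝ g) b = (B.constr ℝ g) (B ⟨b, hbe⟩) := by rw [hB]
      _ = g ⟨b, hbe⟩ := by rw [Module.Basis.constr_basis]
      _ = 1 := by simp only [g]; rw [if_pos hb]
  have hfin : (S ∩ RS.proj J ⁻¹' {α}).Finite :=
    RS.finite.subset (fun x hx => hSsub hx.1)
  obtain ⟨a, ha, hmax⟩ := hfin.exists_maximalFor f _ hne
  refine ⟨a, ha, ?_⟩
  intro b hb hmem
  have h1 : f a ≤ f (a + b) := by rw [map_add, hf b hb]; linarith
  have h2 := hmax hmem h1
  rw [map_add, hf b hb] at h2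
  linarith

lemma aux_sum_inner (s : Finset V) (c : V → ℝ) (x : V) :
    (inner ℝ (∑ b ∈ s, c b • b) x : ℝ) = ∑ b ∈ s, c b * inner ℝ b x := by
  rw [sum_inner]; exact Finset.sum_congr rfl fun b _ => real_inner_smul_left b x (c b)

end RootSystemData

open RootSystemData in
theorem stmt0 {V : Type} [NormedAddCommGroup V] [InnerProductSpace ℝ V]
    (RS : RootSystemData V) (J : Finset V) (hJ : J ⊆ RS.base)
    (α : RS.Qspace J) (hα : α ∈ RS.relRoots J)
    (S : Set V) (hS : RS.IsComponent S)
    (hne : (S ∩ RS.proj J ⁻¹' {α}).Nonempty) :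
    ∃! a : V, RS.IsMaximalIn (S ∩ RS.proj J ⁻¹' {α}) a := by
  classical
  have hα0 : α ≠ 0 := hα.2
  obtain ⟨a, hmaxa⟩ := RS.aux_exists_max J hS.1 hne
  refine ⟨a, hmaxa, ?_⟩
  intro a' hmaxa'
  by_contra hnea
  have haΦ : a ∈ RS.Φ := hS.1 hmaxa.1.1
  have ha'Φ : a' ∈ RS.Φ := hS.1 hmaxa'.1.1
  have hpa : RS.proj J a = α := hmaxa.1.2
  have hpa' : RS.proj J a' = α := hmaxa'.1.2
  obtain ⟨z, hz⟩ := RS.aux_coords J hJ ha'Φ haΦ (by rw [hpa', hpa])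
  set p : V → ℕ := fun b => (z b).toNat with hp
  set n : V → ℕ := fun b => (-(z b)).toNat with hn
  have hzpn' : ∀ b, (p b : ℤ) - (n b : ℤ) = z b := by
    intro b; simp only [hp, hn]; omega
  have hzpn : ∀ b, (z b : ℝ) = ((p b : ℕ) : ℝ) - ((n b : ℕ) : ℝ) := by
    intro b
    have h := hzpn' b
    exact_mod_cast (congrArg (fun t : ℤ => (t : ℝ)) h).symm
  have hPN_eq : a' - a = (∑ b ∈ RS.base \ J, ((p b : ℕ) : ℝ) • b)
      - ∑ b ∈ RS.base \ J, ((n b : ℕ) : ℝ) • b := by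
    rw [hz, ← Finset.sum_sub_distrib]
    exact Finset.sum_congr rfl fun b _ => by rw [← sub_smul, ← hzpn]
  have hdisj : ∀ b ∈ RS.base \ J, p b = 0 ∨ n b = 0 := by
    intro b _
    simp only [hp, hn]
    omega
  have hdom := RS.aux_dom J hα0 hS hmaxa
  have hdom' := RS.aux_dom J hα0 hS hmaxa'
  by_cases hNcase : ∀ b ∈ RS.base \ J, n b = 0
  · have hN0 : ∑ b ∈ RS.base \ J, ((n b : ℕ) : ℝ) • b = 0 :=
      Finset.sum_eq_zero fun b hb => by rw [hNcase b hb]; simp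
    have hP : a' - a = ∑ b ∈ RS.base \ J, ((p b : ℕ) : ℝ) • b := by
      rw [hPN_eq, hN0, sub_zero]
    have hPne : (∑ b ∈ RS.base \ J, ((p b : ℕ) : ℝ) • b) ≠ 0 := by
      rw [← hP]; exact sub_ne_zero.2 hnea
    refine RS.aux_no_higher J hα0 hS hmaxa (∑ b ∈ RS.base \ J, p b) p le_rfl hPne ?_
    rw [← hP, show a + (a' - a) = a' by abel]
    exact hmaxa'.1
  by_cases hPcase : ∀ b ∈ RS.base \ J, p b = 0
  · have hP0 : ∑ b ∈ RS.base \ J, ((p b : ℕ) : ℝ) • b = 0 :=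
      Finset.sum_eq_zero fun b hb => by rw [hPcase b hb]; simp
    have hN : a - a' = ∑ b ∈ RS.base \ J, ((n b : ℕ) : ℝ) • b := by
      rw [show a - a' = -(a' - a) by abel, hPN_eq, hP0]
      abel
    have hNne : (∑ b ∈ RS.base \ J, ((n b : ℕ) : ℝ) • b) ≠ 0 := by
      rw [← hN]; exact sub_ne_zero.2 (fun h => hnea h.symm)
    refine RS.aux_no_higher J hα0 hS hmaxa' (∑ b ∈ RS.base \ J, n b) n le_rfl hNne ?_
    rw [← hN, show a' + (a - a') = a by abel]
    exact hmaxa.1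
  push_neg at hNcase hPcase
  obtain ⟨b0, hb0Δ, hb0⟩ := hNcase
  obtain ⟨b1, hb1Δ, hb1⟩ := hPcase
  have hw := RS.aux_descend J hα0 hS hdom' (∑ b ∈ RS.base \ J, n b) a p n
    hmaxa.1 le_rfl hdisj hPN_eq
  set P := ∑ b ∈ RS.base \ J, ((p b : ℕ) : ℝ) • b with hPdef
  set N := ∑ b ∈ RS.base \ J, ((n b : ℕ) : ℝ) • b with hNdef
  have hwΦ : a - N ∈ RS.Φ := hS.1 hw.1
  have hww : (0:ℝ) < inner ℝ (a - N) (a - N) := RS.aux_inner_self_pos hwΦ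
  have hwP : a - N = a' - P := by
    have h1 : a' = a + (P - N) := by rw [← hPN_eq]; abel
    rw [h1]; abel
  have ha'eq : a' = (a - N) + P := by rw [hwP]; abel
  have hPa : (0:ℝ) ≤ inner ℝ P a := by
    rw [hPdef, aux_sum_inner]
    refine Finset.sum_nonneg fun b hb => ?_
    rw [← real_inner_comm b a]
    exact mul_nonneg (Nat.cast_nonneg _) (hdom b hb)
  have ha'N : (0:ℝ) ≤ inner ℝ a' N := by
    rw [hNdef, aux_inner_sum]
    exact Finset.sum_nonneg fun b hb => mul_nonneg (Nat.cast_nonneg _) (hdom' b hb)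
  have hPN2 : (inner ℝ P N : ℝ) ≤ 0 := RS.aux_PN_nonpos J p n hdisj
  have hkey : (0:ℝ) < inner ℝ a' a := by
    have e1 : (inner ℝ a' a : ℝ) = inner ℝ (a - N) a + inner ℝ P a := by
      rw [ha'eq, inner_add_left]
    have e2 : (inner ℝ (a - N) a : ℝ) = inner ℝ (a - N) (a - N) + inner ℝ (a - N) N := by
      nth_rewrite 2 [show a = (a - N) + N from by abel]
      rw [inner_add_right]
    have e3 : (inner ℝ (a - N) N : ℝ) = inner ℝ a' N - inner ℝ P N := by
      rw [hwP, inner_sub_left]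
    linarith
  have hroot := RS.aux_sub_mem ha'Φ haΦ hkey hnea
  rcases RS.base_gen _ hroot with ⟨c, hc⟩ | ⟨c, hc⟩
  · set r : V → ℝ := fun x => (c x : ℝ) - (if x ∈ RS.base \ J then (z x : ℝ) else 0) with hr
    have hr0 : ∑ x ∈ RS.base, r x • x = 0 := by
      simp only [hr, sub_smul]
      rw [Finset.sum_sub_distrib, aux_sum_ext (RS.base \ J) RS.base Finset.sdiff_subset,
        aux_nat_sum, ← hc, ← hz]
      exact sub_self _
    have h5 := RS.aux_indepR r hr0 b0 (Finset.mem_sdiff.1 hb0Δ).1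
    rw [hr] at h5
    simp only [if_pos hb0Δ] at h5
    have hzb0 : z b0 < 0 := by
      simp only [hn] at hb0
      omega
    have hc0 : (0:ℝ) ≤ (c b0 : ℝ) := Nat.cast_nonneg _
    have hz0 : ((z b0 : ℤ) : ℝ) < 0 := by exact_mod_cast hzb0
    linarith
  · set r : V → ℝ := fun x => (c x : ℝ) + (if x ∈ RS.base \ J then (z x : ℝ) else 0) with hr
    have hr0 : ∑ x ∈ RS.base, r x • x = 0 := by
      simp only [hr, add_smul]
      rw [Finset.sum_add_distrib, aux_sum_ext (RS.base \ J) RS.base Finset.sdiff_subset,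
        aux_nat_sum, ← hc, ← hz]
      abel
    have h5 := RS.aux_indepR r hr0 b1 (Finset.mem_sdiff.1 hb1Δ).1
    rw [hr] at h5
    simp only [if_pos hb1Δ] at h5
    have hzb1 : 0 < z b1 := by
      simp only [hp] at hb1
      omega
    have hc1 : (0:ℝ) ≤ (c b1 : ℝ) := Nat.cast_nonneg _
    have hz1 : (0:ℝ) < ((z b1 : ℤ) : ℝ) := by exact_mod_cast hzb1
    linarith
end

section
/- Let Φ be a reduced root system with base Π, J ⊆ Π, and π: ZΦ → ZΦ/⟨Π∖J⟩ the projection. Let Φ° be an irreducible component of Φ and α a nonzero element of π(Φ). If iα and jα both lie in π(Φ)∖{0} for positive integers i, j with i ≠ j, then the difference of the Π-maximal roots of π⁻¹(iα)∩Φ° and π⁻¹(jα)∩Φ° is again a root of Φ. -/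
open scoped RealInnerProductSpace

section Helpers2
variable {V : Type} [NormedAddCommGroup V] [InnerProductSpace ℝ V]

lemma rinner_self_pos {x : V} (hx : x ≠ 0) : 0 < ⟪x, x⟫ := by
  rcases eq_or_lt_of_le (real_inner_self_nonneg (x := x)) with h | h
  · exact absurd (inner_self_eq_zero.mp h.symm) hx
  · exact h

lemma cone_nonneg (K : Finset V)
    (hobt : ∀ k ∈ K, ∀ k' ∈ K, k ≠ k' → ⟪k, k'⟫ ≤ 0)
    {x w : V} (hx : x ∈ Submodule.span ℝ (K : Set V))
    (hxk : ∀ k ∈ K, 0 ≤ ⟪x, k⟫) (hwk : ∀ k ∈ K, 0 ≤ ⟪w, k⟫) :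
    0 ≤ ⟪x, w⟫ := by
  classical
  obtain ⟨f, -, hf⟩ := Submodule.mem_span_finset.mp hx
  set p : V → ℝ := fun k => max (f k) 0 with hp
  set n : V → ℝ := fun k => max (-f k) 0 with hn
  have hpnn : ∀ k, 0 ≤ p k := fun k => le_max_right _ _
  have hnnn : ∀ k, 0 ≤ n k := fun k => le_max_right _ _
  have hpn0 : ∀ k, p k * n k = 0 := by
    intro k; rcases le_total (f k) 0 with h | h
    · simp [hp, hn, max_eq_right h]
    · simp [hp, hn, max_eq_right (neg_nonpos_of_nonneg h)]
  have hfeq : ∀ k, f k = p k - n k := by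
    intro k; rcases le_total (f k) 0 with h | h
    · simp [hp, hn, max_eq_right h, max_eq_left (neg_nonneg.mpr h)]
    · simp [hp, hn, max_eq_left h, max_eq_right (neg_nonpos_of_nonneg h)]
  set P : V := ∑ k ∈ K, p k • k with hP
  set N : V := ∑ k ∈ K, n k • k with hN
  have hxPN : x = P - N := by
    rw [← hf, hP, hN, ← Finset.sum_sub_distrib]
    exact Finset.sum_congr rfl fun k _ => by rw [← sub_smul, ← hfeq]
  have hPN : ⟪P, N⟫ ≤ 0 := by
    rw [hP, sum_inner]
    apply Finset.sum_nonpos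
    intro k hk
    rw [real_inner_smul_left, hN, inner_sum, Finset.mul_sum]
    apply Finset.sum_nonpos
    intro k' hk'
    rw [real_inner_smul_right]
    by_cases hkk : k = k'
    · subst hkk
      have h0 := hpn0 k
      nlinarith [real_inner_self_nonneg (x := k)]
    · have h1 := hobt k hk k' hk' hkk
      have h2 := hpnn k; have h3 := hnnn k'
      have h4 : n k' * ⟪k, k'⟫ ≤ 0 := mul_nonpos_iff.mpr (Or.inl ⟨h3, h1⟩)
      exact mul_nonpos_iff.mpr (Or.inl ⟨h2, h4⟩)
  have hxN : 0 ≤ ⟪x, N⟫ := by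
    rw [hN, inner_sum]
    apply Finset.sum_nonneg
    intro k hk
    rw [real_inner_smul_right]
    exact mul_nonneg (hnnn k) (hxk k hk)
  have hNzero : N = 0 := by
    have h1 : ⟪x, N⟫ = ⟪P, N⟫ - ⟪N, N⟫ := by rw [hxPN, inner_sub_left]
    have h2 : (0:ℝ) ≤ ⟪N, N⟫ := real_inner_self_nonneg
    have h3 : ⟪N, N⟫ = 0 := by linarith
    exact inner_self_eq_zero.mp h3
  have hxP : x = P := by rw [hxPN, hNzero, sub_zero]
  rw [hxP, hP, sum_inner]
  apply Finset.sum_nonneg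
  intro k hk
  rw [real_inner_smul_left]
  exact mul_nonneg (hpnn k) (by rw [real_inner_comm]; exact hwk k hk)


lemma pair_lemma (RS : RootSystemData V) {x y : V} (hx : x ∈ RS.Φ) (hy : y ∈ RS.Φ)
    (hne : x ≠ y) (hpos : 0 < ⟪x, y⟫) : x - y ∈ RS.Φ := by
  have hx0 : x ≠ 0 := fun h => RS.zero_notMem (h ▸ hx)
  have hy0 : y ≠ 0 := fun h => RS.zero_notMem (h ▸ hy)
  have hxx := rinner_self_pos hx0
  have hyy := rinner_self_pos hy0
  by_cases hdep : ∃ t : ℝ, y = t • x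
  · obtain ⟨t, ht⟩ := hdep
    rcases RS.reduced x hx t (ht ▸ hy) with h1 | h1
    · rw [h1, one_smul] at ht
      exact absurd ht.symm hne
    · rw [h1] at ht
      rw [ht, real_inner_smul_right] at hpos
      nlinarith
  · have hCS : ⟪x, y⟫ ^ 2 < ⟪x, x⟫ * ⟪y, y⟫ := by
      have hz0 : y - (⟪x, y⟫ / ⟪x, x⟫) • x ≠ 0 := by
        intro h
        rw [sub_eq_zero] at h
        exact hdep ⟨⟪x, y⟫ / ⟪x, x⟫, h⟩
      have hz := rinner_self_pos hz0
      have hexp : ⟪y - (⟪x, y⟫ / ⟪x, x⟫) • x, y - (⟪x, y⟫ / ⟪x, x⟫) • x⟫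
          = ⟪y, y⟫ - ⟪x, y⟫ ^ 2 / ⟪x, x⟫ := by
        simp only [inner_sub_left, inner_sub_right, real_inner_smul_left,
          real_inner_smul_right, real_inner_comm y x]
        field_simp
        ring
      rw [hexp] at hz
      have hd : ⟪x, y⟫ ^ 2 / ⟪x, x⟫ * ⟪x, x⟫ = ⟪x, y⟫ ^ 2 :=
        div_mul_cancel₀ _ (ne_of_gt hxx)
      nlinarith [mul_pos hz hxx]
    obtain ⟨n1, hn1⟩ := RS.cartan_int y hy x hx
    obtain ⟨n2, hn2⟩ := RS.cartan_int x hx y hy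
    have hyx : (inner ℝ y x : ℝ) = ⟪x, y⟫ := real_inner_comm x y
    have hn1pos : (0:ℝ) < (n1:ℝ) := by
      rw [← hn1]
      apply div_pos (by rw [hyx]; linarith) hyy
    have hn2pos : (0:ℝ) < (n2:ℝ) := by
      rw [← hn2]
      exact div_pos (by linarith) hxx
    have h11 : 1 ≤ n1 := by
      have : (0:ℤ) < n1 := by exact_mod_cast hn1pos
      omega
    have h12 : 1 ≤ n2 := by
      have : (0:ℤ) < n2 := by exact_mod_cast hn2pos
      omega
    have hprod : (n1:ℝ) * (n2:ℝ) < 4 := by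
      rw [← hn1, ← hn2, hyx, div_mul_div_comm, div_lt_iff₀ (mul_pos hyy hxx)]
      nlinarith [hCS]
    have hone : n1 = 1 ∨ n2 = 1 := by
      by_contra hc
      push_neg at hc
      have h2a : 2 ≤ n1 := by omega
      have h2b : 2 ≤ n2 := by omega
      have h4 : (4:ℤ) ≤ n1 * n2 := by nlinarith
      have h4R : (4:ℝ) ≤ (n1:ℝ) * (n2:ℝ) := by exact_mod_cast h4
      linarith
    rcases hone with h | h
    · have hr := RS.reflect_mem y hy x hx
      rw [hn1, h] at hr
      simpa using hr
    · have hr := RS.reflect_mem x hx y hy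
      rw [hn2, h] at hr
      simp only [Int.cast_one, one_smul] at hr
      have := RS.neg_mem _ hr
      rwa [neg_sub] at this

lemma pair_lemma_add (RS : RootSystemData V) {x y : V} (hx : x ∈ RS.Φ) (hy : y ∈ RS.Φ)
    (hne : x ≠ -y) (hneg : ⟪x, y⟫ < 0) : x + y ∈ RS.Φ := by
  have h := pair_lemma RS hx (RS.neg_mem y hy) hne
    (by rw [inner_neg_right]; linarith)
  rwa [sub_neg_eq_add] at h

lemma base_coords (RS : RootSystemData V) {f : V → ℝ}
    (hf : ∑ s ∈ RS.base, f s • s = 0) {b : V} (hb : b ∈ RS.base) : f b = 0 := by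
  have h0 : ∑ i : RS.base, f (i:V) • (i:V) = 0 := by
    rw [Finset.sum_coe_sort RS.base (fun s => f s • s)]
    exact hf
  exact linearIndependent_iff'.mp RS.base_indep Finset.univ (fun i => f (i:V)) h0
    ⟨b, hb⟩ (Finset.mem_univ _)

lemma no_nat_diff (RS : RootSystemData V) {b b' : V} (hb : b ∈ RS.base) (hb' : b' ∈ RS.base)
    (hne : b ≠ b') (c : V → ℕ) (hc : b - b' = ∑ s ∈ RS.base, c s • s) : False := by
  classical
  have hcR : b - b' = ∑ s ∈ RS.base, (c s : ℝ) • s := by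
    rw [hc]
    exact Finset.sum_congr rfl fun s _ => (Nat.cast_smul_eq_nsmul ℝ _ _).symm
  have hsum : ∑ s ∈ RS.base,
      ((c s : ℝ) - (if s = b then 1 else 0) + (if s = b' then 1 else 0)) • s = 0 := by
    simp only [sub_smul, add_smul, ite_smul, one_smul, zero_smul]
    rw [Finset.sum_add_distrib, Finset.sum_sub_distrib, Finset.sum_ite_eq' RS.base b,
      Finset.sum_ite_eq' RS.base b', if_pos hb, if_pos hb', ← hcR]
    abel
  have h1 := base_coords RS hsum hb'
  simp only [if_neg (Ne.symm hne), if_pos rfl, if_true] at h1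
  have h2 : (0:ℝ) ≤ (c b' : ℝ) := Nat.cast_nonneg _
  linarith

lemma base_obtuse (RS : RootSystemData V) {b b' : V} (hb : b ∈ RS.base) (hb' : b' ∈ RS.base)
    (hne : b ≠ b') : ⟪b, b'⟫ ≤ 0 := by
  by_contra h
  push_neg at h
  have hroot : b - b' ∈ RS.Φ := pair_lemma RS (RS.base_sub hb) (RS.base_sub hb') hne h
  rcases RS.base_gen _ hroot with ⟨c, hc⟩ | ⟨c, hc⟩
  · exact no_nat_diff RS hb hb' hne c hc
  · rw [neg_sub] at hc
    exact no_nat_diff RS hb' hb (Ne.symm hne) c hc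

lemma comp_closed (RS : RootSystemData V) {S : Set V} (hS : RS.IsComponent S) {a c : V}
    (ha : a ∈ S) (hc : c ∈ RS.Φ) (hsum : a + c ∈ RS.Φ) : a + c ∈ S := by
  by_contra h
  have horth := hS.2.2.1
  have h1 : ⟪a, a + c⟫ = 0 := horth a ha (a + c) ⟨hsum, h⟩
  by_cases hcS : c ∈ S
  · have h2 : ⟪c, a + c⟫ = 0 := horth c hcS (a + c) ⟨hsum, h⟩
    have h3 : ⟪a + c, a + c⟫ = 0 := by
      rw [inner_add_left, h1, h2, add_zero]
    exact RS.zero_notMem (inner_self_eq_zero.mp h3 ▸ hsum)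
  · have h3 : ⟪a, c⟫ = 0 := horth a ha c ⟨hc, hcS⟩
    have h4 : ⟪a, a⟫ = 0 := by
      rw [inner_add_right, h3, add_zero] at h1
      exact h1
    have ha0 : a = 0 := inner_self_eq_zero.mp h4
    exact RS.zero_notMem (ha0 ▸ hS.1 ha)

lemma proj_eq_zero_iff (RS : RootSystemData V) {J : Finset V} {v : V} :
    RS.proj J v = 0 ↔ v ∈ Submodule.span ℝ ((RS.base : Set V) \ (J : Set V)) :=
  Submodule.Quotient.mk_eq_zero _

lemma proj_base_zero (RS : RootSystemData V) {J : Finset V} {k : V} (hk : k ∈ RS.base)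
    (hkJ : k ∉ J) : RS.proj J k = 0 :=
  (proj_eq_zero_iff RS).mpr (Submodule.subset_span ⟨hk, hkJ⟩)

lemma dominance (RS : RootSystemData V) {J : Finset V} {S : Set V} (hS : RS.IsComponent S)
    {m : V} {β : RS.Qspace J} (hmS : m ∈ S) (hmF : RS.proj J m = β) (hβ : β ≠ 0)
    (hmax : ∀ b ∈ RS.base, m + b ∉ S ∩ RS.proj J ⁻¹' {β})
    {k : V} (hk : k ∈ RS.base) (hkJ : k ∉ J) : 0 ≤ ⟪m, k⟫ := by
  by_contra hneg
  push_neg at hneg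
  have hkΦ : k ∈ RS.Φ := RS.base_sub hk
  have hk0 : RS.proj J k = 0 := proj_base_zero RS hk hkJ
  have hmΦ : m ∈ RS.Φ := hS.1 hmS
  have hmnk : m ≠ -k := by
    intro h
    apply hβ
    rw [← hmF, h, map_neg, hk0, neg_zero]
  have hsum : m + k ∈ RS.Φ := pair_lemma_add RS hmΦ hkΦ hmnk hneg
  have hsumS : m + k ∈ S := comp_closed RS hS hmS hkΦ hsum
  refine hmax k hk ⟨hsumS, ?_⟩
  simp only [Set.mem_preimage, Set.mem_singleton_iff, map_add, hk0, add_zero, hmF]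

end Helpers2

open RootSystemData in
theorem stmt1 {V : Type} [NormedAddCommGroup V] [InnerProductSpace ℝ V]
    (RS : RootSystemData V) (J : Finset V) (hJ : J ⊆ RS.base)
    (S : Set V) (hS : RS.IsComponent S)
    (α : RS.Qspace J)
    (i j : ℕ) (hi : 0 < i) (hj : 0 < j) (hij : i ≠ j)
    (hiα : (i : ℤ) • α ∈ RS.relRoots J) (hjα : (j : ℤ) • α ∈ RS.relRoots J)
    (mi mj : V)
    (hmi : RS.IsMaximalIn (S ∩ RS.proj J ⁻¹' {(i : ℤ) • α}) mi)
    (hmj : RS.IsMaximalIn (S ∩ RS.proj J ⁻¹' {(j : ℤ) • α}) mj) :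
    mj - mi ∈ RS.Φ := by
  classical
  obtain ⟨⟨hmiS, hmiF⟩, hmiMax⟩ := hmi
  obtain ⟨⟨hmjS, hmjF⟩, hmjMax⟩ := hmj
  have hmiΦ : mi ∈ RS.Φ := hS.1 hmiS
  have hmjΦ : mj ∈ RS.Φ := hS.1 hmjS
  have hpi : RS.proj J mi = (i : ℤ) • α := hmiF
  have hpj : RS.proj J mj = (j : ℤ) • α := hmjF
  have hα0i : (i : ℤ) • α ≠ 0 := fun h => hiα.2 (Set.mem_singleton_iff.mpr h)
  have hα0j : (j : ℤ) • α ≠ 0 := fun h => hjα.2 (Set.mem_singleton_iff.mpr h)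
  have hiR : (0:ℝ) < (i:ℝ) := by exact_mod_cast hi
  have hjR : (0:ℝ) < (j:ℝ) := by exact_mod_cast hj
  -- iα ≠ jα, hence mi ≠ mj
  have hane : (i : ℤ) • α ≠ (j : ℤ) • α := by
    intro h
    have h1 : ((i:ℤ):ℝ) • α = ((j:ℤ):ℝ) • α := by
      rw [Int.cast_smul_eq_zsmul, Int.cast_smul_eq_zsmul]; exact h
    have h2 : (((i:ℤ):ℝ) - ((j:ℤ):ℝ)) • α = 0 := by
      rw [sub_smul, h1, sub_self]
    rcases smul_eq_zero.mp h2 with h3 | h3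
    · have : (i:ℝ) = (j:ℝ) := by push_cast at h3 ⊢; linarith
      exact hij (by exact_mod_cast this)
    · exact hα0i (by rw [h3, smul_zero])
  have hmne : mi ≠ mj := fun h => hane (by rw [← hpi, ← hpj, h])
  -- dominance for mi and mj
  have hdomi : ∀ k ∈ RS.base, k ∉ J → 0 ≤ ⟪mi, k⟫ := fun k hk hkJ =>
    dominance RS hS hmiS hpi hα0i hmiMax hk hkJ
  have hdomj : ∀ k ∈ RS.base, k ∉ J → 0 ≤ ⟪mj, k⟫ := fun k hk hkJ =>
    dominance RS hS hmjS hpj hα0j hmjMax hk hkJ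
  -- the subspace T = span (base \ J)
  set T : Submodule ℝ V := Submodule.span ℝ ((RS.base : Set V) \ (J : Set V)) with hT
  have hseteq : ((RS.base : Set V) \ (J : Set V)) = ((RS.base \ J : Finset V) : Set V) :=
    (Finset.coe_sdiff _ _).symm
  haveI hfin : FiniteDimensional ℝ T := by
    rw [hT, hseteq]
    exact FiniteDimensional.span_of_finite ℝ (Finset.finite_toSet _)
  set uT : V := (T.orthogonalProjection mi : V) with huT
  set wT : V := (T.orthogonalProjection mj : V) with hwT
  have huTT : uT ∈ T := SetLike.coe_mem _
  have hwTT : wT ∈ T := SetLike.coe_mem _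
  have huP : mi - uT ∈ Tᗮ := T.sub_starProjection_mem_orthogonal mi
  have hwP : mj - wT ∈ Tᗮ := T.sub_starProjection_mem_orthogonal mj
  -- v := i•mj - j•mi lies in T
  have hvT : (i:ℝ) • mj - (j:ℝ) • mi ∈ T := by
    have hproj0 : RS.proj J ((i:ℝ) • mj - (j:ℝ) • mi) = 0 := by
      rw [map_sub, map_smul, map_smul, hpi, hpj, ← Int.cast_smul_eq_zsmul ℝ,
        ← Int.cast_smul_eq_zsmul ℝ, smul_smul, smul_smul]
      push_cast
      rw [mul_comm]
      exact sub_self _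
    exact (proj_eq_zero_iff RS).mp hproj0
  -- projection of v is v, hence relation between perpendicular parts
  have hperp : (i:ℝ) • (mj - wT) = (j:ℝ) • (mi - uT) := by
    have h2 : (T.orthogonalProjection ((i:ℝ) • mj - (j:ℝ) • mi) : V)
        = (i:ℝ) • wT - (j:ℝ) • uT := by
      rw [map_sub, map_smul, map_smul]
      simp [huT, hwT]
    have h3 : (i:ℝ) • mj - (j:ℝ) • mi = (i:ℝ) • wT - (j:ℝ) • uT := by
      rw [← h2]; exact ((T.starProjection_eq_self_iff).mpr hvT).symm
    have h4 : (i:ℝ) • (mj - wT) - (j:ℝ) • (mi - uT)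
        = ((i:ℝ) • mj - (j:ℝ) • mi) - ((i:ℝ) • wT - (j:ℝ) • uT) := by
      rw [smul_sub, smul_sub]; abel
    rw [h3, sub_self] at h4
    exact sub_eq_zero.mp h4
  -- mi - uT ≠ 0
  have hup_ne : mi - uT ≠ 0 := by
    intro h
    have h1 : mi ∈ T := by
      rw [sub_eq_zero] at h
      rw [h]; exact huTT
    have h2 : RS.proj J mi = 0 := (proj_eq_zero_iff RS).mpr h1
    rw [hpi] at h2
    exact hα0i h2
  -- ⟪uT, mj⟫ ≥ 0 via the cone lemma
  have hkey1 : 0 ≤ ⟪uT, mj⟫ := by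
    apply cone_nonneg (RS.base \ J)
    · intro k hk k' hk' hkk
      rw [Finset.mem_sdiff] at hk hk'
      exact base_obtuse RS hk.1 hk'.1 hkk
    · rw [← hseteq]; exact huTT
    · intro k hk
      rw [Finset.mem_sdiff] at hk
      have hkT : k ∈ T := Submodule.subset_span ⟨hk.1, hk.2⟩
      have h0 : ⟪k, mi - uT⟫ = 0 := (Submodule.mem_orthogonal T _).mp huP k hkT
      rw [inner_sub_right] at h0
      have := hdomi k hk.1 hk.2
      rw [real_inner_comm]
      rw [real_inner_comm k mi] at this
      linarith
    · intro k hk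
      rw [Finset.mem_sdiff] at hk
      exact hdomj k hk.1 hk.2
  -- ⟪mi - uT, mj⟫ = (j/i) ⟪mi - uT, mi - uT⟫
  have hkey2 : ⟪mi - uT, mj⟫ = ((j:ℝ) / (i:ℝ)) * ⟪mi - uT, mi - uT⟫ := by
    have hsplit : mj = wT + (mj - wT) := by abel
    have hw0 : ⟪mi - uT, wT⟫ = 0 := by
      have := (Submodule.mem_orthogonal T _).mp huP wT hwTT
      rw [real_inner_comm] at this
      exact this
    have hscal : mj - wT = ((j:ℝ) / (i:ℝ)) • (mi - uT) := by
      have := congrArg (fun z => ((i:ℝ))⁻¹ • z) hperp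
      simp only [smul_smul, inv_mul_cancel₀ (ne_of_gt hiR), one_smul] at this
      rw [this]
      congr 1
      rw [div_eq_inv_mul]
    calc ⟪mi - uT, mj⟫ = ⟪mi - uT, wT⟫ + ⟪mi - uT, mj - wT⟫ := by
          rw [← inner_add_right, ← hsplit]
      _ = ((j:ℝ) / (i:ℝ)) * ⟪mi - uT, mi - uT⟫ := by
          rw [hw0, zero_add, hscal, real_inner_smul_right]
  -- positivity of ⟪mi, mj⟫
  have hinner : 0 < ⟪mi, mj⟫ := by
    have hsplit : ⟪mi, mj⟫ = ⟪uT, mj⟫ + ⟪mi - uT, mj⟫ := by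
      rw [← inner_add_left]; congr 1; abel
    have hposperp : 0 < ⟪mi - uT, mi - uT⟫ := rinner_self_pos hup_ne
    have hcoef : 0 < (j:ℝ) / (i:ℝ) := div_pos hjR hiR
    have := mul_pos hcoef hposperp
    rw [hsplit, hkey2]
    linarith
  have hfinal := pair_lemma RS hmjΦ hmiΦ (Ne.symm hmne)
    (by rw [real_inner_comm]; exact hinner)
  exact hfinal
end

section
/- Let Φ be a reduced root system with base Π, J ⊆ Π, π the projection modulo ⟨Π∖J⟩, and Φ_J = π(Φ)∖{0} the relative roots. Let α ∈ Φ_J and let β = π(b) for some b ∈ J be a simple relative root linearly independent from α. Then the set {i ∈ Z : α + iβ ∈ Φ_J} is an interval of integers: there exist m, n ≥ 0 such that (α + Zβ) ∩ Φ_J = {α + iβ : −m ≤ i ≤ n}. -/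
open scoped RealInnerProductSpace

section AuxLemmas
variable {V : Type} [NormedAddCommGroup V] [InnerProductSpace ℝ V]



/-- Coefficient extraction for a linearly independent finset. -/
lemma finset_indep_coeff {s : Finset V}
    (hs : LinearIndependent ℝ ((↑) : (↑s : Set V) → V))
    (f : V → ℝ) (h : ∑ x ∈ s, f x • x = 0) : ∀ x ∈ s, f x = 0 := by
  have := linearIndependent_iff'.1 hs Finset.univ (fun x => f x)
  intro x hx
  have h' : ∑ i : (↑s : Set V), f i • (i : V) = 0 := by
    rw [← h]
    exact Finset.sum_coe_sort s (fun x => f x • x)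
  exact this h' ⟨x, hx⟩ (Finset.mem_univ _)

/-- A dual vector for a linearly independent finset. -/
lemma exists_dual_vector_finset {s : Finset V}
    (hs : LinearIndependent ℝ ((↑) : (↑s : Set V) → V)) :
    ∃ v : V, ∀ c ∈ s, ⟪c, v⟫ = 1 := by
  classical
  set W := Submodule.span ℝ (↑s : Set V) with hW
  haveI : FiniteDimensional ℝ W := FiniteDimensional.span_finset ℝ s
  let T : W →ₗ[ℝ] ((↑s : Set V) → ℝ) :=
    LinearMap.pi fun c => (innerSL ℝ (c : V)).toLinearMap.comp W.subtype
  have hinj : Function.Injective T := by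
    rw [← LinearMap.ker_eq_bot, LinearMap.ker_eq_bot']
    intro w hw
    have hgen : ∀ x ∈ (↑s : Set V), ⟪x, (w : V)⟫ = 0 := by
      intro x hx
      have := congrFun hw ⟨x, hx⟩
      simpa [T] using this
    have hall : ∀ y ∈ Submodule.span ℝ (↑s : Set V), ⟪y, (w : V)⟫ = 0 := by
      intro y hy
      induction hy using Submodule.span_induction with
      | mem x hx => exact hgen x hx
      | zero => simp
      | add x y _ _ hx hy => rw [inner_add_left, hx, hy]; ring
      | smul t x _ hx => rw [real_inner_smul_left, hx]; ring
    have hww : ⟪(w : V), (w : V)⟫ = 0 := hall _ w.2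
    have : (w : V) = 0 := by
      rwa [inner_self_eq_zero] at hww
    exact Subtype.ext this
  have hdim : Module.finrank ℝ W = Module.finrank ℝ ((↑s : Set V) → ℝ) := by
    rw [Module.finrank_pi]
    rw [hW, finrank_span_finset_eq_card hs]
    simp
  have hsurj := (LinearMap.injective_iff_surjective_of_finrank_eq_finrank hdim).1 hinj
  obtain ⟨w, hw⟩ := hsurj (fun _ => 1)
  refine ⟨(w : V), fun c hc => ?_⟩
  have := congrFun hw ⟨c, hc⟩
  simpa [T] using this

end AuxLemmas

namespace RootSystemData
variable {V : Type} [NormedAddCommGroup V] [InnerProductSpace ℝ V] (RS : RootSystemData V)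

lemma inner_self_pos' {a : V} (ha : a ∈ RS.Φ) : (0:ℝ) < ⟪a, a⟫ := by
  have h0 : a ≠ 0 := fun h => RS.zero_notMem (h ▸ ha)
  rw [real_inner_self_eq_norm_mul_norm]
  exact mul_pos (norm_pos_iff.2 h0) (norm_pos_iff.2 h0)

lemma ne_zero_of_mem {a : V} (ha : a ∈ RS.Φ) : a ≠ 0 :=
  fun h => RS.zero_notMem (h ▸ ha)

lemma baseIndepSet : LinearIndependent ℝ ((↑) : (↑RS.base : Set V) → V) := RS.base_indep

lemma indep_of_subset {s : Finset V} (h : s ⊆ RS.base) :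
    LinearIndependent ℝ ((↑) : (↑s : Set V) → V) :=
  (linearIndependent_subtype_iff.1 RS.baseIndepSet).mono (by exact_mod_cast h)

lemma sub_simple_notMem {c c' : V} (hc : c ∈ RS.base) (hc' : c' ∈ RS.base) (hne : c ≠ c') :
    c - c' ∉ RS.Φ := by
  intro hmem
  have key : ∀ c c' : V, c ∈ RS.base → c' ∈ RS.base → c ≠ c' →
      ∀ n : V → ℕ, c - c' ≠ ∑ x ∈ RS.base, n x • x := by
    classical
    intro c c' hc hc' hne n heq
    have h1 : ∑ x ∈ RS.base, (if x = c' then (1:ℝ) else 0) • x = c' := by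
      simp [ite_smul, hc']
    have h2 : ∑ x ∈ RS.base, (if x = c then (1:ℝ) else 0) • x = c := by
      simp [ite_smul, hc]
    have h3 : ∑ x ∈ RS.base, ((n x : ℝ)) • x = c - c' := by
      rw [heq]
      exact Finset.sum_congr rfl (fun x _ => Nat.cast_smul_eq_nsmul ℝ (n x) x)
    have hsum : ∑ x ∈ RS.base,
        ((n x : ℝ) + (if x = c' then 1 else 0) - (if x = c then 1 else 0)) • x = 0 := by
      simp only [sub_smul, add_smul, Finset.sum_sub_distrib, Finset.sum_add_distrib, h1, h2, h3]
      abel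
    have := finset_indep_coeff RS.baseIndepSet _ hsum c' hc'
    simp [Ne.symm hne] at this
    have hn : (0:ℝ) ≤ (n c' : ℝ) := Nat.cast_nonneg _
    linarith
  rcases RS.base_gen _ hmem with ⟨n, hn⟩ | ⟨n, hn⟩
  · exact key c c' hc hc' hne n hn
  · exact key c' c hc' hc hne.symm n (by rw [← hn]; abel)

lemma sub_mem_of_inner_pos {a b : V} (ha : a ∈ RS.Φ) (hb : b ∈ RS.Φ)
    (hip : 0 < ⟪a, b⟫) (hne : a ≠ b) : a - b ∈ RS.Φ := by
  have hsa := RS.inner_self_pos' ha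
  have hsb := RS.inner_self_pos' hb
  obtain ⟨na, hna⟩ := RS.cartan_int a ha b hb
  obtain ⟨nb, hnb⟩ := RS.cartan_int b hb a ha
  have hcomm : ⟪b, a⟫ = ⟪a, b⟫ := real_inner_comm a b
  have hna0 : (0:ℝ) < (na : ℝ) := by rw [← hna]; positivity
  have hnb0 : (0:ℝ) < (nb : ℝ) := by rw [← hnb, hcomm]; positivity
  have hna1 : 1 ≤ na := by exact_mod_cast hna0
  have hnb1 : 1 ≤ nb := by exact_mod_cast hnb0
  by_cases hA : na = 1
  · have := RS.reflect_mem a ha b hb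
    rw [hna, hA] at this
    simp only [Int.cast_one, one_smul] at this
    have := RS.neg_mem _ this
    simpa using this
  by_cases hB : nb = 1
  · have := RS.reflect_mem b hb a ha
    rw [hnb, hB] at this
    simpa using this
  · -- na ≥ 2, nb ≥ 2 : Cauchy-Schwarz equality case
    have hna2 : (2:ℝ) ≤ (na:ℝ) := by exact_mod_cast (by omega : (2:ℤ) ≤ na)
    have hnb2 : (2:ℝ) ≤ (nb:ℝ) := by exact_mod_cast (by omega : (2:ℤ) ≤ nb)
    have hCS : ⟪a, b⟫ * ⟪a, b⟫ ≤ ⟪a, a⟫ * ⟪b, b⟫ := real_inner_mul_inner_self_le a b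
    have hprod : (na:ℝ) * (nb:ℝ) * (⟪a,a⟫ * ⟪b,b⟫) = 4 * (⟪a,b⟫ * ⟪a,b⟫) := by
      rw [← hna, ← hnb, hcomm]; field_simp; ring
    have heq : ⟪a, b⟫ * ⟪a, b⟫ = ⟪a, a⟫ * ⟪b, b⟫ := by
      nlinarith [mul_le_mul hna2 hnb2 (by norm_num) (by linarith : (0:ℝ) ≤ (na:ℝ)),
        mul_pos hsa hsb]
    -- equality in Cauchy-Schwarz ⟹ b = r • a
    have hA0 : a ≠ 0 := RS.ne_zero_of_mem ha
    have hB0 : b ≠ 0 := RS.ne_zero_of_mem hb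
    have hnA : (0:ℝ) < ‖a‖ := norm_pos_iff.2 hA0
    have hnB : (0:ℝ) < ‖b‖ := norm_pos_iff.2 hB0
    have habs : |⟪a, b⟫ / (‖a‖ * ‖b‖)| = 1 := by
      have h1 : ⟪a,a⟫ = ‖a‖ * ‖a‖ := real_inner_self_eq_norm_mul_norm a
      have h2 : ⟪b,b⟫ = ‖b‖ * ‖b‖ := real_inner_self_eq_norm_mul_norm b
      have hfac : (⟪a,b⟫ - ‖a‖ * ‖b‖) * (⟪a,b⟫ + ‖a‖ * ‖b‖) = 0 := by nlinarith
      have hsum : (0:ℝ) < ⟪a,b⟫ + ‖a‖ * ‖b‖ := by positivity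
      have hip' : ⟪a,b⟫ = ‖a‖ * ‖b‖ := by
        rcases mul_eq_zero.1 hfac with h | h
        · linarith
        · linarith
      rw [hip', div_self (by positivity), abs_one]
    obtain ⟨-, r, hr0, hr⟩ := (abs_real_inner_div_norm_mul_norm_eq_one_iff a b).1 habs
    rcases RS.reduced a ha r (hr ▸ hb) with h1 | h1
    · exact absurd (by rw [hr, h1, one_smul]) (Ne.symm hne)
    · rw [h1] at hr
      rw [hr, real_inner_smul_right] at hip
      nlinarith

lemma base_obtuse {c c' : V} (hc : c ∈ RS.base) (hc' : c' ∈ RS.base) (hne : c ≠ c') :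
    ⟪c, c'⟫ ≤ 0 := by
  by_contra h
  push_neg at h
  exact RS.sub_simple_notMem hc hc' hne
    (RS.sub_mem_of_inner_pos (RS.base_sub hc) (RS.base_sub hc') h hne)


end RootSystemData

set_option maxHeartbeats 2000000 in
open RootSystemData in
theorem stmt3 {V : Type} [NormedAddCommGroup V] [InnerProductSpace ℝ V]
    (RS : RootSystemData V) (J : Finset V) (hJ : J ⊆ RS.base)
    (α : RS.Qspace J) (hα : α ∈ RS.relRoots J)
    (β : RS.Qspace J) (hβ : RS.IsSimpleRel J β)
    (hind : ∀ m k : ℤ, m • α + k • β = 0 → m = 0 ∧ k = 0) :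
    ∃ m n : ℕ, ∀ i : ℤ, (α + i • β ∈ RS.relRoots J ↔ -(m : ℤ) ≤ i ∧ i ≤ (n : ℤ)) := by
  classical
  obtain ⟨hβ0, b, hbJ, hβb⟩ := hβ
  obtain ⟨⟨a₀, ha₀Φ, ha₀⟩, hα0'⟩ := hα
  have hbbase : b ∈ RS.base := hJ hbJ
  have hbΦ : b ∈ RS.Φ := RS.base_sub hbbase
  set K : Submodule ℝ V := Submodule.span ℝ ((RS.base : Set V) \ (J : Set V)) with hK
  haveI hFD : FiniteDimensional ℝ K := by
    rw [hK, ← Finset.coe_sdiff]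
    exact FiniteDimensional.span_finset ℝ _
  set Qp : V →L[ℝ] K := K.orthogonalProjectionOnto with hQp
  set P : V →ₗ[ℝ] V := LinearMap.id - (K.subtype ∘ₗ (Qp : V →ₗ[ℝ] K)) with hP
  have hPdef : ∀ x : V, P x = x - (Qp x : V) := fun x => rfl
  have hPker : ∀ u ∈ K, P u = 0 := by
    intro u hu
    rw [hPdef, (show (Qp u : V) = u from Submodule.starProjection_eq_self_iff.2 hu), sub_self]
  have hPorth : ∀ (x : V), ∀ u ∈ K, ⟪P x, u⟫ = 0 := by
    intro x u hu
    have h1 : P x ∈ Kᗮ := by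
      rw [hPdef]
      exact Submodule.sub_starProjection_mem_orthogonal (K := K) x
    have := (Submodule.mem_orthogonal K (P x)).1 h1 u hu
    rw [real_inner_comm]
    exact this
  have hproj0 : ∀ u ∈ K, RS.proj J u = 0 := by
    intro u hu
    have : RS.proj J u = Submodule.Quotient.mk u := rfl
    rw [this]
    exact (Submodule.Quotient.mk_eq_zero _).2 hu
  have hproj_eq : ∀ u v : V, RS.proj J u = RS.proj J v ↔ u - v ∈ K := by
    intro u v
    have h1 : RS.proj J u = Submodule.Quotient.mk u := rfl
    have h2 : RS.proj J v = Submodule.Quotient.mk v := rfl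
    rw [h1, h2, Submodule.Quotient.eq]
  have hP_of_proj : ∀ u v : V, RS.proj J u = RS.proj J v → P u = P v := by
    intro u v h
    have h' : u - v ∈ K := (hproj_eq u v).1 h
    have h0 : P (u - v) = 0 := hPker _ h'
    rw [map_sub] at h0
    exact sub_eq_zero.1 h0
  have hPb0 : P b ≠ 0 := by
    intro h
    have hbK : b ∈ K := by
      rw [hPdef, sub_eq_zero] at h
      rw [h]
      exact (Qp b).2
    exact hβ0 (by rw [hβb]; exact hproj0 b hbK)
  set S : Set ℤ := {i | α + i • β ∈ RS.relRoots J} with hS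
  have hne0 : ∀ i : ℤ, α + i • β ≠ 0 := by
    intro i h
    have := (hind 1 i (by rw [one_smul]; exact h)).1
    exact one_ne_zero this
  have hmemS : ∀ i : ℤ, i ∈ S ↔ ∃ a ∈ RS.Φ, RS.proj J a = α + i • β := by
    intro i
    simp only [hS, Set.mem_setOf_eq, RootSystemData.relRoots, Set.mem_diff, Set.mem_image,
      Set.mem_singleton_iff]
    constructor
    · rintro ⟨⟨a, ha, h⟩, -⟩; exact ⟨a, ha, h⟩
    · rintro ⟨a, ha, h⟩; exact ⟨⟨a, ha, h⟩, hne0 i⟩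
  have hlift : ∀ (i : ℤ) (d : V), RS.proj J d = α + i • β → P d = P a₀ + i • P b := by
    intro i d hd
    have h1 : RS.proj J d = RS.proj J (a₀ + i • b) := by
      rw [map_add, map_zsmul, ha₀, ← hβb, hd]
    have h2 := hP_of_proj _ _ h1
    rw [h2, map_add, map_zsmul]
  set r : ℝ := ⟪P a₀, P b⟫ with hr
  set t : ℝ := ⟪P b, P b⟫ with htdef
  have ht : (0:ℝ) < t := by
    rw [htdef, real_inner_self_eq_norm_mul_norm]
    exact mul_pos (norm_pos_iff.2 hPb0) (norm_pos_iff.2 hPb0)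
  -- anti-dominant lifts
  have hanti : ∀ x : RS.Qspace J, (∃ a ∈ RS.Φ, RS.proj J a = x) →
      ∃ a ∈ RS.Φ, RS.proj J a = x ∧ ∀ c ∈ RS.base \ J, ⟪a, c⟫ ≤ 0 := by
    intro x hx
    obtain ⟨v, hv⟩ := exists_dual_vector_finset (RS.indep_of_subset (Finset.sdiff_subset))
    have hLfin : {a : V | a ∈ RS.Φ ∧ RS.proj J a = x}.Finite :=
      RS.finite.subset (fun a ha => ha.1)
    obtain ⟨a, haL, hmin⟩ := hLfin.toFinset.exists_min_image (fun a => ⟪a, v⟫) (by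
      obtain ⟨a, ha, h⟩ := hx
      exact ⟨a, hLfin.mem_toFinset.2 ⟨ha, h⟩⟩)
    rw [Set.Finite.mem_toFinset] at haL
    refine ⟨a, haL.1, haL.2, ?_⟩
    intro c hcs
    by_contra hpos
    push_neg at hpos
    have hcbase : c ∈ RS.base := (Finset.mem_sdiff.1 hcs).1
    have hcΦ : c ∈ RS.Φ := RS.base_sub hcbase
    have hcc := RS.inner_self_pos' hcΦ
    have hca : (0:ℝ) < ⟪c, a⟫ := by rw [real_inner_comm]; exact hpos
    set nn : ℝ := 2 * ⟪c, a⟫ / ⟪c, c⟫ with hnn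
    have hnnpos : 0 < nn := by
      rw [hnn]
      positivity
    have ha' : a - nn • c ∈ RS.Φ := RS.reflect_mem c hcΦ a haL.1
    have hcK : c ∈ K := Submodule.subset_span (by
      simp only [Set.mem_diff, Finset.mem_coe]
      exact ⟨(Finset.mem_sdiff.1 hcs).1, fun h => (Finset.mem_sdiff.1 hcs).2 h⟩)
    have hproja' : RS.proj J (a - nn • c) = x := by
      rw [map_sub, map_smul, hproj0 c hcK, smul_zero, sub_zero, haL.2]
    have hmem' : a - nn • c ∈ hLfin.toFinset := hLfin.mem_toFinset.2 ⟨ha', hproja'⟩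
    have hle := hmin _ hmem'
    rw [inner_sub_left, real_inner_smul_left] at hle
    have hvc : ⟪c, v⟫ = 1 := hv c hcs
    rw [hvc] at hle
    linarith
  -- sign of the projection of b onto K
  have hQb : ∀ a : V, (∀ c ∈ RS.base \ J, ⟪a, c⟫ ≤ 0) → 0 ≤ ⟪a, (Qp b : V)⟫ := by
    intro a hac
    have hQbspan : (Qp b : V) ∈ Submodule.span ℝ (↑(RS.base \ J) : Set V) := by
      rw [Finset.coe_sdiff, ← hK]
      exact (Qp b).2
    obtain ⟨f, -, hf⟩ := Submodule.mem_span_finset.1 hQbspan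
    have hsubbase : RS.base \ J ⊆ RS.base := Finset.sdiff_subset
    have hQbc : ∀ c ∈ RS.base \ J, ⟪(Qp b : V), c⟫ ≤ 0 := by
      intro c hcs
      have hcK : c ∈ K := Submodule.subset_span (by
        simp only [Set.mem_diff, Finset.mem_coe]
        exact ⟨(Finset.mem_sdiff.1 hcs).1, fun h => (Finset.mem_sdiff.1 hcs).2 h⟩)
      have h1 : ⟪P b, c⟫ = 0 := hPorth b c hcK
      have h2 : ⟪(Qp b : V), c⟫ = ⟪b, c⟫ := by
        have hQeq : (Qp b : V) = b - P b := by rw [hPdef]; abel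
        rw [hQeq, inner_sub_left, h1, sub_zero]
      rw [h2]
      have hbc : b ≠ c := fun h => (Finset.mem_sdiff.1 hcs).2 (h ▸ hbJ)
      exact RS.base_obtuse hbbase ((Finset.mem_sdiff.1 hcs).1) hbc
    have hfle : ∀ c ∈ RS.base \ J, f c ≤ 0 := by
      by_contra hcon
      push_neg at hcon
      set posS := (RS.base \ J).filter (fun c => 0 < f c) with hposS
      set w : V := ∑ c ∈ posS, f c • c with hw
      have hposs : posS ⊆ RS.base \ J := Finset.filter_subset _ _
      have h1 : ⟪(Qp b : V), w⟫ ≤ 0 := by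
        rw [hw, inner_sum]
        apply Finset.sum_nonpos
        intro c hc
        rw [real_inner_smul_right]
        have hc' := Finset.mem_filter.1 hc
        nlinarith [hQbc c hc'.1, hc'.2]
      have h2 : 0 ≤ ⟪(Qp b : V) - w, w⟫ := by
        have hsplit : (Qp b : V) - w = ∑ c ∈ (RS.base \ J) \ posS, f c • c := by
          rw [← hf, hw, ← Finset.sum_sdiff hposs]
          abel
        rw [hsplit, sum_inner]
        apply Finset.sum_nonneg
        intro c hc
        rw [real_inner_smul_left, inner_sum]
        have hcmem := Finset.mem_sdiff.1 hc
        have hfc : f c ≤ 0 := by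
          by_contra h'
          push_neg at h'
          exact hcmem.2 (Finset.mem_filter.2 ⟨hcmem.1, h'⟩)
        have hsum : ∑ c' ∈ posS, ⟪c, f c' • c'⟫ ≤ 0 := by
          apply Finset.sum_nonpos
          intro c' hc'
          rw [real_inner_smul_right]
          have hc'' := Finset.mem_filter.1 hc'
          have hnecc : c ≠ c' := fun h => hcmem.2 (h ▸ hc')
          have hob : ⟪c, c'⟫ ≤ 0 :=
            RS.base_obtuse (hsubbase hcmem.1) (hsubbase hc''.1) hnecc
          nlinarith [hc''.2]
        nlinarith
      have h3 : ⟪w, w⟫ ≤ 0 := by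
        have hid : ⟪w, w⟫ = ⟪(Qp b : V), w⟫ - ⟪(Qp b : V) - w, w⟫ := by
          rw [inner_sub_left]; ring
        linarith
      have hw0 : w = 0 := by
        have h4 : (0:ℝ) ≤ ⟪w, w⟫ := real_inner_self_nonneg
        exact inner_self_eq_zero.1 (le_antisymm h3 h4)
      obtain ⟨c0, hc0s, hc0⟩ := hcon
      have hwsum : ∑ c ∈ RS.base \ J, (if 0 < f c then f c else 0) • c = 0 := by
        rw [← hw0, hw, hposS, Finset.sum_filter]
        apply Finset.sum_congr rfl
        intro c _
        by_cases h' : 0 < f c <;> simp [h']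
      have := finset_indep_coeff (RS.indep_of_subset Finset.sdiff_subset) _ hwsum c0 hc0s
      rw [if_pos hc0] at this
      linarith
    rw [← hf, inner_sum]
    apply Finset.sum_nonneg
    intro c hc
    rw [real_inner_smul_right]
    nlinarith [hfle c hc, hac c hc]
  -- inner product of an antidominant lift with b
  have hPP : ∀ (i : ℤ) (d : V), RS.proj J d = α + i • β → ⟪P d, P b⟫ = r + i * t := by
    intro i d hd
    rw [hlift i d hd, inner_add_left, ← Int.cast_smul_eq_zsmul ℝ, real_inner_smul_left, hr, htdef]
  have hdPb : ∀ d : V, ⟪d, P b⟫ = ⟪P d, P b⟫ := by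
    intro d
    have hdK : d - P d ∈ K := by
      rw [hPdef]
      have : d - (d - (Qp d : V)) = (Qp d : V) := by abel
      rw [this]
      exact (Qp d).2
    have h0 : ⟪P b, d - P d⟫ = 0 := hPorth b _ hdK
    have h0' : ⟪d - P d, P b⟫ = 0 := by rw [real_inner_comm]; exact h0
    rw [inner_sub_left] at h0'
    linarith
  have hsplitb : ∀ d : V, ⟪d, b⟫ = ⟪d, P b⟫ + ⟪d, (Qp b : V)⟫ := by
    intro d
    rw [← inner_add_right]
    congr 1
    rw [hPdef]
    abel
  -- the step lemma
  have hstep : ∀ i j : ℤ, i ∈ S → j ∈ S → i < j → (j - 1) ∈ S ∨ (i + 1) ∈ S := by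
    intro i j hi hj hij
    rcases lt_or_ge 0 (r + j * t) with hcase | hcase
    · left
      obtain ⟨d, hdΦ, hdp, hdanti⟩ := hanti _ ((hmemS j).1 hj)
      have hinner : 0 < ⟪d, b⟫ := by
        have hQ : 0 ≤ ⟪d, (Qp b : V)⟫ := hQb d hdanti
        have h1 : ⟪P d, P b⟫ = r + j * t := hPP j d hdp
        rw [hsplitb, hdPb, h1]
        linarith
      have hdb : d ≠ b := by
        intro h
        rw [h, ← hβb] at hdp
        have hz : α + (j - 1) • β = 0 := by
          have h2 : α + (j - 1) • β = (α + j • β) - β := by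
            rw [sub_smul, one_smul]; abel
          rw [h2, ← hdp, sub_self]
        exact one_ne_zero (hind 1 (j-1) (by rw [one_smul]; exact hz)).1
      have hsub : d - b ∈ RS.Φ := RS.sub_mem_of_inner_pos hdΦ hbΦ hinner hdb
      refine (hmemS (j-1)).2 ⟨d - b, hsub, ?_⟩
      rw [map_sub, hdp, ← hβb, sub_smul, one_smul]
      abel
    · right
      have hij' : (i:ℝ) + 1 ≤ (j:ℝ) := by exact_mod_cast hij
      have hneg : r + i * t < 0 := by nlinarith
      obtain ⟨g, hgΦ, hgp⟩ := (hmemS i).1 hi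
      have hxmem : ∃ a ∈ RS.Φ, RS.proj J a = -(α + i • β) :=
        ⟨-g, RS.neg_mem g hgΦ, by rw [map_neg, hgp]⟩
      obtain ⟨e, heΦ, hep, heanti⟩ := hanti _ hxmem
      have hPe : P e = -(P a₀ + i • P b) := by
        have h1 : RS.proj J e = RS.proj J (-(a₀ + i • b)) := by
          rw [map_neg, map_add, map_zsmul, ha₀, ← hβb, hep]
        rw [hP_of_proj _ _ h1, map_neg, map_add, map_zsmul]
      have hinner : 0 < ⟪e, b⟫ := by
        have hQ : 0 ≤ ⟪e, (Qp b : V)⟫ := hQb e heanti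
        have h1 : ⟪P e, P b⟫ = -(r + i * t) := by
          rw [hPe, inner_neg_left, inner_add_left, ← Int.cast_smul_eq_zsmul ℝ,
            real_inner_smul_left, hr, htdef]
        rw [hsplitb, hdPb, h1]
        linarith
      have heb : e ≠ b := by
        intro h
        rw [h, ← hβb] at hep
        have hz : α + (i + 1) • β = 0 := by
          have h6 : α + i • β = -β := by
            rw [← neg_neg (α + i • β), ← hep]
          have h4 : α + (i + 1) • β = (α + i • β) + β := by
            rw [add_smul, one_smul]; abel
          rw [h4, h6, neg_add_cancel]
        exact one_ne_zero (hind 1 (i+1) (by rw [one_smul]; exact hz)).1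
      have hsub : e - b ∈ RS.Φ := RS.sub_mem_of_inner_pos heΦ hbΦ hinner heb
      refine (hmemS (i+1)).2 ⟨-(e - b), RS.neg_mem _ hsub, ?_⟩
      rw [map_neg, map_sub, hep, ← hβb, add_smul, one_smul]
      abel
  -- finiteness of S
  have hSfin : S.Finite := by
    have h1 : Set.InjOn (fun i : ℤ => α + i • β)
        ((fun i : ℤ => α + i • β) ⁻¹' (RS.proj J '' RS.Φ)) := by
      intro i _ j _ h
      simp only at h
      have hz : (0:ℤ) • α + (i - j) • β = 0 := by
        rw [zero_smul, zero_add, sub_smul]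
        have : (i:ℤ) • β = j • β := by
          have := h
          exact add_left_cancel this
        rw [this]
        abel
      have := (hind 0 (i - j) hz).2
      omega
    have h2 : ((fun i : ℤ => α + i • β) ⁻¹' (RS.proj J '' RS.Φ)).Finite :=
      Set.Finite.preimage h1 (RS.finite.image _)
    apply h2.subset
    intro i hi
    obtain ⟨a, ha, h⟩ := (hmemS i).1 hi
    exact ⟨a, ha, h⟩
  have hS0 : (0:ℤ) ∈ S := by
    have h0 : α + (0:ℤ) • β = α := by rw [zero_smul, add_zero]
    show α + (0:ℤ) • β ∈ RS.relRoots J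
    rw [h0]
    exact ⟨⟨a₀, ha₀Φ, ha₀⟩, hα0'⟩
  set Sf := hSfin.toFinset with hSf
  have hSne : Sf.Nonempty := ⟨0, hSfin.mem_toFinset.2 hS0⟩
  set m0 := Sf.min' hSne with hm0def
  set n0 := Sf.max' hSne with hn0def
  have hm0S : m0 ∈ S := hSfin.mem_toFinset.1 (Sf.min'_mem hSne)
  have hn0S : n0 ∈ S := hSfin.mem_toFinset.1 (Sf.max'_mem hSne)
  have hm0 : m0 ≤ 0 := Sf.min'_le 0 (hSfin.mem_toFinset.2 hS0)
  have hn0 : 0 ≤ n0 := Sf.le_max' 0 (hSfin.mem_toFinset.2 hS0)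
  have hint : ∀ d : ℕ, ∀ i j : ℤ, i ∈ S → j ∈ S → j - i = d → ∀ k, i ≤ k → k ≤ j → k ∈ S := by
    intro d
    induction d with
    | zero =>
      intro i j hi _ hd k h1 h2
      have hk : k = i := by omega
      rwa [hk]
    | succ d ih =>
      intro i j hi hj hd k h1 h2
      have hij : i < j := by omega
      rcases hstep i j hi hj hij with h | h
      · rcases eq_or_lt_of_le h2 with hk | hk
        · rwa [hk]
        · exact ih i (j-1) hi h (by omega) k h1 (by omega)
      · rcases eq_or_lt_of_le h1 with hk | hk
        · rwa [← hk]
        · exact ih (i+1) j h hj (by omega) k (by omega) h2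
  refine ⟨(-m0).toNat, n0.toNat, ?_⟩
  intro i
  have hmcast : (((-m0).toNat : ℤ)) = -m0 := Int.toNat_of_nonneg (by omega)
  have hncast : ((n0.toNat : ℤ)) = n0 := Int.toNat_of_nonneg hn0
  have hiffS : (α + i • β ∈ RS.relRoots J) ↔ i ∈ S := Iff.rfl
  rw [hiffS]
  constructor
  · intro hiS
    have hiS' : i ∈ Sf := hSfin.mem_toFinset.2 hiS
    have hle1 := Sf.min'_le i hiS'
    have hle2 := Sf.le_max' i hiS'
    omega
  · rintro ⟨h1, h2⟩
    exact hint (n0 - m0).toNat m0 n0 hm0S hn0S (by omega) i (by omega) (by omega)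
end

section
/- Let Φ be a reduced root system with base Π, J ⊆ Π, π the projection modulo ⟨Π∖J⟩, Φ_J = π(Φ)∖{0}. Let α ∈ Φ_J and β a simple relative root linearly independent from α. Fix integers i, j ≥ 1 and let k (respectively l) be the maximal integer with iα + kβ ∈ Φ_J (respectively jα + lβ ∈ Φ_J). Then (jα + lβ) − (iα + kβ) ∈ Φ_J ∪ {0}. -/
open scoped RealInnerProductSpace

namespace StmtAux


variable {V : Type} [NormedAddCommGroup V] [InnerProductSpace ℝ V]

lemma inner_self_pos' (x : V) (h : x ≠ 0) : (0:ℝ) < ⟪x,x⟫ :=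
  lt_of_le_of_ne real_inner_self_nonneg (by symm; simpa [inner_self_eq_zero] using h)

/-- The reflection in `c` as a linear endomorphism. -/
noncomputable def refl (c : V) : Module.End ℝ V where
  toFun x := x - (2 * (inner ℝ c x : ℝ) / (inner ℝ c c : ℝ)) • c
  map_add' x y := by
    show _ - _ • _ = (_ - _ • _) + (_ - _ • _)
    rw [inner_add_right,
      show 2 * ((⟪c,x⟫:ℝ) + ⟪c,y⟫) / (⟪c,c⟫:ℝ)
        = 2 * ⟪c,x⟫ / ⟪c,c⟫ + 2 * ⟪c,y⟫ / ⟪c,c⟫ by ring, add_smul]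
    abel
  map_smul' t x := by
    simp only [RingHom.id_apply]
    rw [real_inner_smul_right,
      show 2 * (t * (⟪c,x⟫:ℝ)) / (⟪c,c⟫:ℝ) = t * (2 * ⟪c,x⟫ / ⟪c,c⟫) by ring,
      smul_sub, smul_smul]

lemma refl_apply (c x : V) : refl c x = x - (2 * (inner ℝ c x : ℝ) / (inner ℝ c c : ℝ)) • c := rfl

lemma inner_refl (c x : V) (hc : c ≠ 0) : (inner ℝ c (refl c x) : ℝ) = - inner ℝ c x := by
  rw [refl_apply, inner_sub_right, real_inner_smul_right,
    div_mul_cancel₀ _ (ne_of_gt (inner_self_pos' c hc))]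
  ring

lemma refl_invol (c x : V) (hc : c ≠ 0) : refl c (refl c x) = x := by
  rw [refl_apply c (refl c x), inner_refl c x hc, refl_apply]
  rw [show 2 * (-(⟪c,x⟫:ℝ)) / (⟪c,c⟫:ℝ) = -(2 * ⟪c,x⟫ / ⟪c,c⟫) by ring, neg_smul]
  abel

lemma sum_mem (RS : RootSystemData V) (x b : V) (hx : x ∈ RS.Φ) (hb : b ∈ RS.Φ)
    (hneg : (inner ℝ x b : ℝ) < 0) (hne : x + b ≠ 0) : x + b ∈ RS.Φ := by
  have hx0 : x ≠ 0 := fun h => RS.zero_notMem (h ▸ hx)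
  have hb0 : b ≠ 0 := fun h => RS.zero_notMem (h ▸ hb)
  have hxx := inner_self_pos' x hx0
  have hbb := inner_self_pos' b hb0
  obtain ⟨n, hn⟩ := RS.cartan_int x hx b hb
  obtain ⟨m, hm⟩ := RS.cartan_int b hb x hx
  have hcomm : (inner ℝ b x : ℝ) = inner ℝ x b := real_inner_comm x b
  have hnneg : (n:ℝ) < 0 := by
    rw [← hn]; exact div_neg_of_neg_of_pos (by linarith) hxx
  have hmneg : (m:ℝ) < 0 := by
    rw [← hm, hcomm]; exact div_neg_of_neg_of_pos (by linarith) hbb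
  have hn1 : n ≤ -1 := by
    have : n < 0 := by exact_mod_cast hnneg
    omega
  have hm1 : m ≤ -1 := by
    have : m < 0 := by exact_mod_cast hmneg
    omega
  rcases eq_or_lt_of_le hn1 with hcase | hcase
  · -- n = -1 : use reflection in x
    have := RS.reflect_mem x hx b hb
    rw [hn, hcase] at this
    norm_num [sub_neg_eq_add] at this
    simpa [add_comm] using this
  · rcases eq_or_lt_of_le hm1 with hcase2 | hcase2
    · have := RS.reflect_mem b hb x hx
      rw [hm, hcase2] at this
      norm_num [sub_neg_eq_add] at this
      simpa [add_comm] using this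
    · -- both ≤ -2 : contradiction, x + b = 0
      exfalso
      have hn2 : (n:ℝ) ≤ -2 := by
        have h2 : n ≤ -2 := by omega
        exact_mod_cast h2
      have hm2 : (m:ℝ) ≤ -2 := by
        have h2 : m ≤ -2 := by omega
        exact_mod_cast h2
      have e1 : 2 * (inner ℝ x b : ℝ) = n * inner ℝ x x := by
        field_simp at hn; linarith [hn]
      have e2 : 2 * (inner ℝ x b : ℝ) = m * inner ℝ b b := by
        rw [← hcomm]; field_simp at hm; linarith [hm]
      have hib1 : (inner ℝ x b : ℝ) ≤ - inner ℝ x x := by nlinarith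
      have hib2 : (inner ℝ x b : ℝ) ≤ - inner ℝ b b := by nlinarith
      have hfin : (inner ℝ (x+b) (x+b) : ℝ) ≤ 0 := by
        rw [real_inner_add_add_self]; linarith
      exact hne (inner_self_eq_zero.mp (le_antisymm hfin real_inner_self_nonneg))

lemma lift (RS : RootSystemData V) (J : Finset V) (a : V) (ha : a ∈ RS.Φ) :
    ∃ v : V,
      RS.proj J v = RS.proj J a ∧
      (∀ u ∈ Submodule.span ℝ ((RS.base : Set V) \ (J : Set V)), (inner ℝ v u : ℝ) = 0) ∧
      (∀ b : V, (inner ℝ v b : ℝ) < 0 →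
        ∃ x ∈ RS.Φ, RS.proj J x = RS.proj J a ∧ (inner ℝ x b : ℝ) < 0) := by
  classical
  set U : Submodule ℝ V := Submodule.span ℝ ((RS.base : Set V) \ (J : Set V)) with hU
  set s : Set (Module.End ℝ V) :=
    {g | ∃ c ∈ (RS.base : Set V) \ (J : Set V), g = refl c} with hs
  have hgenΦ : ∀ c ∈ (RS.base : Set V) \ (J : Set V), c ∈ RS.Φ :=
    fun c hc => RS.base_sub hc.1
  have hgen0 : ∀ c ∈ (RS.base : Set V) \ (J : Set V), c ≠ 0 :=
    fun c hc h => RS.zero_notMem (h ▸ hgenΦ c hc)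
  have hM : ∀ g ∈ Submonoid.closure s, ∀ x ∈ RS.Φ, g x ∈ RS.Φ ∧ g x - x ∈ U := by
    intro g hg
    induction hg using Submonoid.closure_induction with
    | mem g hgs =>
      obtain ⟨c, hc, rfl⟩ := hgs
      intro x hx
      constructor
      · exact RS.reflect_mem c (hgenΦ c hc) x hx
      · rw [refl_apply]
        have he : x - (2 * (inner ℝ c x : ℝ) / (inner ℝ c c : ℝ)) • c - x
            = -((2 * (inner ℝ c x : ℝ) / (inner ℝ c c : ℝ)) • c) := by abel
        rw [he]
        exact Submodule.neg_mem _ (Submodule.smul_mem _ _ (Submodule.subset_span hc))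
    | one =>
      intro x hx
      exact ⟨by simpa using hx, by simp⟩
    | mul g h hg hh ihg ihh =>
      intro x hx
      have h1 := ihh x hx
      have h2 := ihg (h x) h1.1
      refine ⟨by simpa [Module.End.mul_apply] using h2.1, ?_⟩
      have he : (g * h) x - x = (g (h x) - h x) + (h x - x) := by
        rw [Module.End.mul_apply]; abel
      rw [he]
      exact Submodule.add_mem _ h2.2 h1.2
  set O : Set V := {x | ∃ g ∈ Submonoid.closure s, g a = x} with hO
  have hOΦ : O ⊆ RS.Φ := by rintro x ⟨g, hg, rfl⟩; exact (hM g hg a ha).1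
  have hfin : O.Finite := RS.finite.subset hOΦ
  set F : Finset V := hfin.toFinset with hF
  have hmemF : ∀ x, x ∈ F ↔ x ∈ O := fun x => Set.Finite.mem_toFinset hfin
  have haF : a ∈ F := (hmemF a).mpr ⟨1, Submonoid.one_mem _, by simp⟩
  have hFΦ : ∀ x ∈ F, x ∈ RS.Φ := fun x hx => hOΦ ((hmemF x).mp hx)
  have hdiff : ∀ x ∈ F, x - a ∈ U := by
    intro x hx
    obtain ⟨g, hg, rfl⟩ := (hmemF x).mp hx
    exact (hM g hg a ha).2
  have hprojF : ∀ x ∈ F, RS.proj J x = RS.proj J a := by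
    intro x hx
    exact (Submodule.Quotient.eq U).mpr (hdiff x hx)
  have hcard : (0:ℝ) < (F.card : ℝ) := by
    have : 0 < F.card := Finset.card_pos.mpr ⟨a, haF⟩
    exact_mod_cast this
  have hreflF : ∀ c ∈ (RS.base : Set V) \ (J : Set V), ∀ x ∈ F, refl c x ∈ F := by
    intro c hc x hx
    obtain ⟨g, hg, rfl⟩ := (hmemF x).mp hx
    exact (hmemF _).mpr ⟨refl c * g,
      Submonoid.mul_mem _ (Submonoid.subset_closure ⟨c, hc, rfl⟩) hg, rfl⟩
  have hsum0 : ∀ c ∈ (RS.base : Set V) \ (J : Set V),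
      ∑ x ∈ F, (inner ℝ c x : ℝ) = 0 := by
    intro c hc
    have hc0 := hgen0 c hc
    have himage : F.image (fun x => refl c x) = F := by
      apply Finset.Subset.antisymm
      · intro y hy
        obtain ⟨x, hxF, rfl⟩ := Finset.mem_image.mp hy
        exact hreflF c hc x hxF
      · intro x hxF
        exact Finset.mem_image.mpr ⟨refl c x, hreflF c hc x hxF, refl_invol c x hc0⟩
    have hinj : Set.InjOn (fun x => refl c x) F := by
      intro x _ y _ h
      have := congrArg (refl c) h
      simpa [refl_invol c _ hc0] using this
    have hstep : ∑ x ∈ F, (inner ℝ c x : ℝ) = ∑ x ∈ F, (inner ℝ c (refl c x) : ℝ) := by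
      conv_lhs => rw [← himage]
      exact Finset.sum_image (fun x hx y hy h => hinj hx hy h)
    have hneg : ∑ x ∈ F, (inner ℝ c (refl c x) : ℝ) = - ∑ x ∈ F, (inner ℝ c x : ℝ) := by
      rw [← Finset.sum_neg_distrib]
      exact Finset.sum_congr rfl (fun x _ => inner_refl c x hc0)
    rw [hneg] at hstep
    linarith
  refine ⟨(F.card : ℝ)⁻¹ • ∑ x ∈ F, x, ?_, ?_, ?_⟩
  · rw [map_smul, map_sum]
    have he : ∑ x ∈ F, RS.proj J x = F.card • RS.proj J a := by
      rw [Finset.sum_congr rfl hprojF, Finset.sum_const]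
    rw [he, ← Nat.cast_smul_eq_nsmul ℝ, smul_smul, inv_mul_cancel₀ (ne_of_gt hcard), one_smul]
  · intro u hu
    induction hu using Submodule.span_induction with
    | mem u hus =>
      rw [real_inner_smul_left, sum_inner]
      have : ∑ x ∈ F, (inner ℝ x u : ℝ) = 0 := by
        rw [← hsum0 u hus]
        exact Finset.sum_congr rfl (fun x _ => real_inner_comm u x)
      rw [this, mul_zero]
    | zero => exact inner_zero_right _
    | add u w hu hw ihu ihw => rw [inner_add_right, ihu, ihw, add_zero]
    | smul t u hu ihu => rw [real_inner_smul_right, ihu, mul_zero]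
  · intro b hb
    by_contra hcon
    push_neg at hcon
    have h0 : (0:ℝ) ≤ inner ℝ ((F.card : ℝ)⁻¹ • ∑ x ∈ F, x) b := by
      rw [real_inner_smul_left, sum_inner]
      apply mul_nonneg (inv_pos.mpr hcard).le
      exact Finset.sum_nonneg (fun x hx => hcon x (hFΦ x hx) (hprojF x hx))
    linarith


lemma add_rel (RS : RootSystemData V) (J : Finset V) (g d : RS.Qspace J) (vg vd : V)
    (hg : g ∈ RS.relRoots J) (hd : d ∈ RS.relRoots J)
    (hvg : RS.proj J vg = g)
    (hvgU : ∀ u ∈ Submodule.span ℝ ((RS.base : Set V) \ (J : Set V)), (inner ℝ vg u : ℝ) = 0)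
    (hvd : RS.proj J vd = d)
    (hneg : (inner ℝ vg vd : ℝ) < 0) (hne : g + d ≠ 0) : g + d ∈ RS.relRoots J := by
  obtain ⟨⟨aa, haa, hpa⟩, h0g⟩ := hg
  obtain ⟨⟨b, hbb, hpb⟩, h0d⟩ := hd
  obtain ⟨v, hv1, hv2, hv3⟩ := lift RS J aa haa
  have hveq : v = vg := by
    have h1 : RS.proj J v = RS.proj J vg := by rw [hv1, hpa, hvg]
    have h2 : v - vg ∈ Submodule.span ℝ ((RS.base : Set V) \ (J : Set V)) :=
      (Submodule.Quotient.eq _).mp h1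
    have h3 : (inner ℝ (v - vg) (v - vg) : ℝ) = 0 := by
      rw [inner_sub_left, hv2 _ h2, hvgU _ h2, sub_zero]
    exact sub_eq_zero.mp (inner_self_eq_zero.mp h3)
  have hbd : b - vd ∈ Submodule.span ℝ ((RS.base : Set V) \ (J : Set V)) :=
    (Submodule.Quotient.eq _).mp (hpb.trans hvd.symm)
  have hvb : (inner ℝ v b : ℝ) < 0 := by
    have he : (inner ℝ v b : ℝ) = inner ℝ vg vd + inner ℝ vg (b - vd) := by
      rw [hveq, ← inner_add_right]
      congr 1
      abel
    rw [he, hvgU _ hbd, add_zero]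
    exact hneg
  obtain ⟨x, hxΦ, hxp, hxb⟩ := hv3 b hvb
  have hxb0 : x + b ≠ 0 := by
    intro h
    apply hne
    have he : RS.proj J (x + b) = g + d := by rw [map_add, hxp, hpa, hpb]
    rw [h, map_zero] at he
    exact he.symm
  have hmem := sum_mem RS x b hxΦ hbb hxb hxb0
  exact ⟨⟨x + b, hmem, by rw [map_add, hxp, hpa, hpb]⟩, by simpa using hne⟩


end StmtAux

set_option maxHeartbeats 2000000 in
open RootSystemData in
theorem stmt4 {V : Type} [NormedAddCommGroup V] [InnerProductSpace ℝ V]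
    (RS : RootSystemData V) (J : Finset V) (hJ : J ⊆ RS.base)
    (α : RS.Qspace J) (hα : α ∈ RS.relRoots J)
    (β : RS.Qspace J) (hβ : RS.IsSimpleRel J β)
    (hind : ∀ m k : ℤ, m • α + k • β = 0 → m = 0 ∧ k = 0)
    (i j : ℕ) (hi : 1 ≤ i) (hj : 1 ≤ j) (k l : ℤ)
    (hk : (i : ℤ) • α + k • β ∈ RS.relRoots J)
    (hkmax : ∀ k' : ℤ, k < k' → (i : ℤ) • α + k' • β ∉ RS.relRoots J)
    (hl : (j : ℤ) • α + l • β ∈ RS.relRoots J)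
    (hlmax : ∀ l' : ℤ, l < l' → (j : ℤ) • α + l' • β ∉ RS.relRoots J) :
    ((j : ℤ) • α + l • β) - ((i : ℤ) • α + k • β) ∈ RS.relRoots J ∨
      ((j : ℤ) • α + l • β) - ((i : ℤ) • α + k • β) = 0 := by
  classical
  obtain ⟨⟨a, haΦ, hpa⟩, hα0⟩ := hα
  obtain ⟨hβ0, b, hbJ, hbp⟩ := hβ
  have hbΦ : b ∈ RS.Φ := RS.base_sub (hJ hbJ)
  obtain ⟨va, hva1, hva2, -⟩ := StmtAux.lift RS J a haΦ
  obtain ⟨vb, hvb1, hvb2, -⟩ := StmtAux.lift RS J b hbΦ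
  rw [hpa] at hva1
  rw [← hbp] at hvb1
  set vg : V := ((i:ℤ):ℝ) • va + ((k:ℤ):ℝ) • vb with hvg
  set vd : V := ((j:ℤ):ℝ) • va + ((l:ℤ):ℝ) • vb with hvd
  have hprojg : RS.proj J vg = (i:ℤ) • α + k • β := by
    rw [hvg, map_add, map_smul, map_smul, hva1, hvb1,
      Int.cast_smul_eq_zsmul, Int.cast_smul_eq_zsmul]
  have hprojd : RS.proj J vd = (j:ℤ) • α + l • β := by
    rw [hvd, map_add, map_smul, map_smul, hva1, hvb1,
      Int.cast_smul_eq_zsmul, Int.cast_smul_eq_zsmul]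
  have hvgU : ∀ u ∈ Submodule.span ℝ ((RS.base : Set V) \ (J : Set V)),
      (inner ℝ vg u : ℝ) = 0 := by
    intro u hu
    rw [hvg, inner_add_left, real_inner_smul_left, real_inner_smul_left,
      hva2 u hu, hvb2 u hu]
    ring
  have hvdU : ∀ u ∈ Submodule.span ℝ ((RS.base : Set V) \ (J : Set V)),
      (inner ℝ vd u : ℝ) = 0 := by
    intro u hu
    rw [hvd, inner_add_left, real_inner_smul_left, real_inner_smul_left,
      hva2 u hu, hvb2 u hu]
    ring
  have hβrel : β ∈ RS.relRoots J := ⟨⟨b, hbΦ, hbp.symm⟩, by simpa using hβ0⟩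
  have hvb0 : vb ≠ 0 := by
    intro h
    apply hβ0
    rw [← hvb1, h, map_zero]
  have hC : (0:ℝ) < inner ℝ vb vb := StmtAux.inner_self_pos' vb hvb0
  have hkey : ∀ (m : ℕ) (t : ℤ), 1 ≤ m → ((m:ℤ) • α + t • β ∈ RS.relRoots J) →
      (∀ t' : ℤ, t < t' → (m:ℤ) • α + t' • β ∉ RS.relRoots J) →
      ∀ (w : V), RS.proj J w = (m:ℤ) • α + t • β →
      (∀ u ∈ Submodule.span ℝ ((RS.base : Set V) \ (J : Set V)), (inner ℝ w u : ℝ) = 0) →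
      0 ≤ (inner ℝ w vb : ℝ) := by
    intro m t hm hmem hmax w hw hwU
    by_contra hneg
    push_neg at hneg
    have hne : (m:ℤ) • α + t • β + β ≠ 0 := by
      intro h0
      have h1 : (m:ℤ) • α + (t+1) • β = 0 := by
        rw [add_zsmul, one_zsmul, ← add_assoc]
        exact h0
      have h2 := (hind (m:ℤ) (t+1) h1).1
      omega
    have hsum := StmtAux.add_rel RS J _ β w vb hmem hβrel hw hwU hvb1 hneg hne
    have h2 : (m:ℤ) • α + t • β + β = (m:ℤ) • α + (t+1) • β := by
      rw [add_zsmul, one_zsmul, ← add_assoc]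
    rw [h2] at hsum
    exact hmax (t+1) (by omega) hsum
  have hp : 0 ≤ (inner ℝ vg vb : ℝ) := hkey i k hi hk hkmax vg hprojg hvgU
  have hq : 0 ≤ (inner ℝ vd vb : ℝ) := hkey j l hj hl hlmax vd hprojd hvdU
  set A : ℝ := inner ℝ va va with hA
  set B : ℝ := inner ℝ va vb with hB
  set C : ℝ := inner ℝ vb vb with hretC
  have hcomm : (inner ℝ vb va : ℝ) = B := real_inner_comm va vb
  have eg : (inner ℝ vg vb : ℝ) = ((i:ℤ):ℝ) * B + ((k:ℤ):ℝ) * C := by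
    rw [hvg, inner_add_left, real_inner_smul_left, real_inner_smul_left]
  have ed : (inner ℝ vd vb : ℝ) = ((j:ℤ):ℝ) * B + ((l:ℤ):ℝ) * C := by
    rw [hvd, inner_add_left, real_inner_smul_left, real_inner_smul_left]
  have egd : (inner ℝ vg vd : ℝ) = ((i:ℤ):ℝ)*((j:ℤ):ℝ)*A
      + (((i:ℤ):ℝ)*((l:ℤ):ℝ) + ((j:ℤ):ℝ)*((k:ℤ):ℝ))*B + ((k:ℤ):ℝ)*((l:ℤ):ℝ)*C := by
    rw [hvg, hvd, inner_add_left, inner_add_right, inner_add_right,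
      real_inner_smul_left, real_inner_smul_left, real_inner_smul_left, real_inner_smul_left,
      real_inner_smul_right, real_inner_smul_right, real_inner_smul_right, real_inner_smul_right,
      hcomm]
    ring
  have egg : (inner ℝ vg vg : ℝ) = ((i:ℤ):ℝ)*((i:ℤ):ℝ)*A
      + (((i:ℤ):ℝ)*((k:ℤ):ℝ) + ((i:ℤ):ℝ)*((k:ℤ):ℝ))*B + ((k:ℤ):ℝ)*((k:ℤ):ℝ)*C := by
    rw [hvg, inner_add_left, inner_add_right, inner_add_right,
      real_inner_smul_left, real_inner_smul_left, real_inner_smul_left, real_inner_smul_left,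
      real_inner_smul_right, real_inner_smul_right, real_inner_smul_right, real_inner_smul_right,
      hcomm]
    ring
  have edd : (inner ℝ vd vd : ℝ) = ((j:ℤ):ℝ)*((j:ℤ):ℝ)*A
      + (((j:ℤ):ℝ)*((l:ℤ):ℝ) + ((j:ℤ):ℝ)*((l:ℤ):ℝ))*B + ((l:ℤ):ℝ)*((l:ℤ):ℝ)*C := by
    rw [hvd, inner_add_left, inner_add_right, inner_add_right,
      real_inner_smul_left, real_inner_smul_left, real_inner_smul_left, real_inner_smul_left,
      real_inner_smul_right, real_inner_smul_right, real_inner_smul_right, real_inner_smul_right,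
      hcomm]
    ring
  have hCS : B * B ≤ A * C := real_inner_mul_inner_self_le va vb
  have hi1 : (1:ℝ) ≤ ((i:ℤ):ℝ) := by exact_mod_cast hi
  have hj1 : (1:ℝ) ≤ ((j:ℤ):ℝ) := by exact_mod_cast hj
  have hgdC : (inner ℝ vg vd : ℝ) * C = ((i:ℤ):ℝ)*((j:ℤ):ℝ)*(A*C - B*B)
      + (inner ℝ vg vb : ℝ)*(inner ℝ vd vb : ℝ) := by
    rw [egd, eg, ed]
    ring
  have hpos : 0 < (inner ℝ vg vd : ℝ) := by
    have hposC : 0 < (inner ℝ vg vd : ℝ) * C := by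
      by_cases hdeg : A*C - B*B = 0
      · have hgne : vg ≠ 0 := by
          intro h
          have h0 : (i:ℤ) • α + k • β = 0 := by rw [← hprojg, h, map_zero]
          exact (by simpa using hk.2 : (i:ℤ) • α + k • β ≠ 0) h0
        have hdne : vd ≠ 0 := by
          intro h
          have h0 : (j:ℤ) • α + l • β = 0 := by rw [← hprojd, h, map_zero]
          exact (by simpa using hl.2 : (j:ℤ) • α + l • β ≠ 0) h0
        have hgg : 0 < (inner ℝ vg vg : ℝ) := StmtAux.inner_self_pos' vg hgne
        have hdd : 0 < (inner ℝ vd vd : ℝ) := StmtAux.inner_self_pos' vd hdne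
        have hggC : (inner ℝ vg vg : ℝ) * C = ((i:ℤ):ℝ)*((i:ℤ):ℝ)*(A*C - B*B)
            + (inner ℝ vg vb : ℝ)*(inner ℝ vg vb : ℝ) := by
          rw [egg, eg]; ring
        have hddC : (inner ℝ vd vd : ℝ) * C = ((j:ℤ):ℝ)*((j:ℤ):ℝ)*(A*C - B*B)
            + (inner ℝ vd vb : ℝ)*(inner ℝ vd vb : ℝ) := by
          rw [edd, ed]; ring
        have hp' : 0 < (inner ℝ vg vb : ℝ) := by
          rcases lt_or_eq_of_le hp with h | h
          · exact h
          · exfalso; rw [hdeg, ← h] at hggC; nlinarith [mul_pos hgg hC]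
        have hq' : 0 < (inner ℝ vd vb : ℝ) := by
          rcases lt_or_eq_of_le hq with h | h
          · exact h
          · exfalso; rw [hdeg, ← h] at hddC; nlinarith [mul_pos hdd hC]
        rw [hgdC, hdeg]
        nlinarith [mul_pos hp' hq']
      · have hlt : 0 < A*C - B*B := lt_of_le_of_ne (sub_nonneg.mpr hCS) (Ne.symm hdeg)
        rw [hgdC]
        nlinarith [mul_nonneg hp hq,
          mul_pos (mul_pos (lt_of_lt_of_le zero_lt_one hi1) (lt_of_lt_of_le zero_lt_one hj1)) hlt]
    by_contra hcon
    push_neg at hcon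
    nlinarith [mul_nonneg (neg_nonneg.mpr hcon) hC.le]
  by_cases h0 : ((j:ℤ) • α + l • β) - ((i:ℤ) • α + k • β) = 0
  · right; exact h0
  · left
    have hnegrel : -((i:ℤ) • α + k • β) ∈ RS.relRoots J := by
      obtain ⟨⟨x, hxΦ, hxp⟩, hne0⟩ := hk
      refine ⟨⟨-x, RS.neg_mem x hxΦ, by rw [map_neg, hxp]⟩, ?_⟩
      intro h
      rw [Set.mem_singleton_iff, neg_eq_zero] at h
      exact hne0 (Set.mem_singleton_iff.mpr h)
    have hres := StmtAux.add_rel RS J _ _ vd (-vg) hl hnegrel hprojd hvdU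
      (by rw [map_neg, hprojg])
      (by rw [inner_neg_right, real_inner_comm]; linarith)
      (by rw [← sub_eq_add_neg]; exact h0)
    rw [sub_eq_add_neg]
    exact hres
end
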